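/- Let L be one of the logics tΣ_{∞,λ}[μ] or tΠ_{∞,λ}[μ] over a finite relational vocabulary τ, for an ordinal λ ≥ 0 and cardinal μ ≥ 0, and let ⊛ be a quantifier-free sum-like binary operation on τ-structures. If A₁, A₁', A₂, A₂' are τ-structures such that A₁ and A₁' satisfy the same L sentences and A₂ and A₂' satisfy the same L sentences, then A₁ ⊛ A₂ and A₁' ⊛ A₂' satisfy the same L sentences. In particular, the L theory of A₁ ⊛ A₂ is determined by the L theories of A₁ and A₂. -/

import Mathlib

namespace FV

open Cardinal

/-- A (finite) relational vocabulary: a type of relation symbols with arities. -/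
structure Vocab : Type 1 where
  Rel : Type
  arity : Rel → ℕ

/-- A structure over a relational vocabulary. -/
structure Struc (τ : Vocab) : Type 1 where
  carrier : Type
  rel : ∀ R : τ.Rel, (Fin (τ.arity R) → carrier) → Prop

/-- Infinitary formulae in negation normal form over a relational vocabulary,
with free variables among `Fin n`. -/
inductive Formula (τ : Vocab) : ℕ → Type 1 where
  | tru {n : ℕ} : Formula τ n
  | fls {n : ℕ} : Formula τ n
  | rel {n : ℕ} (R : τ.Rel) (ts : Fin (τ.arity R) → Fin n) : Formula τ n
  | nrel {n : ℕ} (R : τ.Rel) (ts : Fin (τ.arity R) → Fin n) : Formula τ n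
  | eq {n : ℕ} (i j : Fin n) : Formula τ n
  | neq {n : ℕ} (i j : Fin n) : Formula τ n
  | iAnd {n : ℕ} (I : Type) (f : I → Formula τ n) : Formula τ n
  | iOr {n : ℕ} (I : Type) (f : I → Formula τ n) : Formula τ n
  | ex {n : ℕ} (φ : Formula τ (n+1)) : Formula τ n
  | all {n : ℕ} (φ : Formula τ (n+1)) : Formula τ n

/-- Binary conjunction (a conjunction of arity 2). -/
def Formula.and {τ : Vocab} {n : ℕ} (φ ψ : Formula τ n) : Formula τ n :=
  Formula.iAnd Bool (fun b => if b then φ else ψ)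

/-- Binary disjunction (a disjunction of arity 2). -/
def Formula.or {τ : Vocab} {n : ℕ} (φ ψ : Formula τ n) : Formula τ n :=
  Formula.iOr Bool (fun b => if b then φ else ψ)

/-- Quantifier-free formulae (in NNF, with finite conjunctions/disjunctions). -/
inductive IsQF {τ : Vocab} : ∀ {n : ℕ}, Formula τ n → Prop where
  | tru {n : ℕ} : IsQF (Formula.tru (τ := τ) (n := n))
  | fls {n : ℕ} : IsQF (Formula.fls (τ := τ) (n := n))
  | rel {n : ℕ} (R : τ.Rel) (ts : Fin (τ.arity R) → Fin n) : IsQF (Formula.rel R ts)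
  | nrel {n : ℕ} (R : τ.Rel) (ts : Fin (τ.arity R) → Fin n) : IsQF (Formula.nrel R ts)
  | eq {n : ℕ} (i j : Fin n) : IsQF (Formula.eq (τ := τ) i j)
  | neq {n : ℕ} (i j : Fin n) : IsQF (Formula.neq (τ := τ) i j)
  | iAnd {n : ℕ} (I : Type) (hI : Finite I) (f : I → Formula τ n)
      (h : ∀ i, IsQF (f i)) : IsQF (Formula.iAnd I f)
  | iOr {n : ℕ} (I : Type) (hI : Finite I) (f : I → Formula τ n)
      (h : ∀ i, IsQF (f i)) : IsQF (Formula.iOr I f)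

/-- Satisfaction of a formula in a structure under an assignment. -/
def Sat {τ : Vocab} (A : Struc τ) : ∀ {n : ℕ}, Formula τ n → (Fin n → A.carrier) → Prop
  | _, .tru, _ => True
  | _, .fls, _ => False
  | _, .rel R ts, v => A.rel R (fun i => v (ts i))
  | _, .nrel R ts, v => ¬ A.rel R (fun i => v (ts i))
  | _, .eq i j, v => v i = v j
  | _, .neq i j, v => v i ≠ v j
  | _, .iAnd I f, v => ∀ i : I, Sat A (f i) v
  | _, .iOr I f, v => ∃ i : I, Sat A (f i) v
  | _, .ex φ, v => ∃ a, Sat A φ (Fin.snoc v a)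
  | _, .all φ, v => ∀ a, Sat A φ (Fin.snoc v a)

/-- The empty assignment. -/
def emptyA {α : Type} : Fin 0 → α := fun i => i.elim0

/-- The (quantifier) rank of a formula: the supremum of the number of quantifiers
on any root-to-leaf path of its parse tree. -/
noncomputable def rank {τ : Vocab} : ∀ {n : ℕ}, Formula τ n → Cardinal
  | _, .iAnd I f => ⨆ i : I, rank (f i)
  | _, .iOr I f => ⨆ i : I, rank (f i)
  | _, .ex φ => rank φ + 1
  | _, .all φ => rank φ + 1
  | _, _ => 0

/-- The size of a formula (number of nodes of its parse tree), as a cardinal. -/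
noncomputable def sizeC {τ : Vocab} : ∀ {n : ℕ}, Formula τ n → Cardinal
  | _, .iAnd I f => 1 + Cardinal.sum (fun i : I => sizeC (f i))
  | _, .iOr I f => 1 + Cardinal.sum (fun i : I => sizeC (f i))
  | _, .ex φ => 1 + sizeC φ
  | _, .all φ => 1 + sizeC φ
  | _, _ => 1

mutual
/-- The class tΣ_{κ,λ} of formulae. -/
inductive TSigma (τ : Vocab) (κ : Cardinal) : Ordinal → ∀ {n : ℕ}, Formula τ n → Prop where
  | qf {n : ℕ} {φ : Formula τ n} : IsQF φ → TSigma τ κ 0 φ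
  | conj {n : ℕ} {lam : Ordinal} (I : Type) (f : I → Formula τ n)
      (hI : Cardinal.mk I < κ) (lam' : I → Ordinal) (hlt : ∀ i, lam' i < lam)
      (h : ∀ i, TPi τ κ (lam' i) (f i)) : TSigma τ κ lam (Formula.iAnd I f)
  | ex {n : ℕ} {lam : Ordinal} {φ : Formula τ (n+1)} :
      TSigma τ κ lam φ → TSigma τ κ lam (Formula.ex φ)

/-- The class tΠ_{κ,λ} of formulae. -/
inductive TPi (τ : Vocab) (κ : Cardinal) : Ordinal → ∀ {n : ℕ}, Formula τ n → Prop where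
  | qf {n : ℕ} {φ : Formula τ n} : IsQF φ → TPi τ κ 0 φ
  | disj {n : ℕ} {lam : Ordinal} (I : Type) (f : I → Formula τ n)
      (hI : Cardinal.mk I < κ) (lam' : I → Ordinal) (hlt : ∀ i, lam' i < lam)
      (h : ∀ i, TSigma τ κ (lam' i) (f i)) : TPi τ κ lam (Formula.iOr I f)
  | all {n : ℕ} {lam : Ordinal} {φ : Formula τ (n+1)} :
      TPi τ κ lam φ → TPi τ κ lam (Formula.all φ)
end

/-- tΣ_{∞,λ}: union of tΣ_{κ,λ} over all infinite cardinals κ. -/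
def TSigmaInf (τ : Vocab) (lam : Ordinal) {n : ℕ} (φ : Formula τ n) : Prop :=
  ∃ κ : Cardinal, ℵ₀ ≤ κ ∧ TSigma τ κ lam φ

/-- tΠ_{∞,λ}: union of tΠ_{κ,λ} over all infinite cardinals κ. -/
def TPiInf (τ : Vocab) (lam : Ordinal) {n : ℕ} (φ : Formula τ n) : Prop :=
  ∃ κ : Cardinal, ℵ₀ ≤ κ ∧ TPi τ κ lam φ

/-- The λ-fold exponential `tower` function (taking suprema at limits). -/
noncomputable def towerC (κ : Cardinal) (l : Ordinal) : Cardinal :=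
  Ordinal.limitRecOn l κ (fun _ ih => (2 : Cardinal) ^ ih)
    (fun o _ ih => ⨆ i : {o' : Ordinal // o' < o}, ih i.1 i.2)

/-- The n-fold exponential `tower` function on naturals. -/
def towerN : ℕ → Cardinal → Cardinal
  | 0, k => k
  | n+1, k => (2 : Cardinal) ^ towerN n k

open Classical in
/-- ρ(κ,λ) = tower(λ,κ) if κ > ω, else ω. -/
noncomputable def rho (κ : Cardinal) (lam : Ordinal) : Cardinal :=
  if ℵ₀ < κ then towerC κ lam else ℵ₀

/-- ∞-propositional formulae over a set `V` of propositional variables. -/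
inductive PropForm (V : Type) : Type 1 where
  | var (v : V) : PropForm V
  | not (p : PropForm V) : PropForm V
  | iAnd (I : Type) (f : I → PropForm V) : PropForm V
  | iOr (I : Type) (f : I → PropForm V) : PropForm V

/-- Binary conjunction of propositional formulae. -/
def PropForm.and {V : Type} (p q : PropForm V) : PropForm V :=
  PropForm.iAnd Bool (fun b => if b then p else q)

/-- Binary disjunction of propositional formulae. -/
def PropForm.or {V : Type} (p q : PropForm V) : PropForm V :=
  PropForm.iOr Bool (fun b => if b then p else q)

/-- Evaluation of an ∞-propositional formula under an assignment. -/
def PropForm.eval {V : Type} (ζ : V → Bool) : PropForm V → Prop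
  | .var v => ζ v = true
  | .not p => ¬ PropForm.eval ζ p
  | .iAnd _ f => ∀ i, PropForm.eval ζ (f i)
  | .iOr _ f => ∃ i, PropForm.eval ζ (f i)

/-- Negation-free ∞-propositional formulae. -/
inductive PropForm.NegFree {V : Type} : PropForm V → Prop where
  | var (v : V) : PropForm.NegFree (.var v)
  | iAnd (I : Type) (f : I → PropForm V) (h : ∀ i, PropForm.NegFree (f i)) :
      PropForm.NegFree (.iAnd I f)
  | iOr (I : Type) (f : I → PropForm V) (h : ∀ i, PropForm.NegFree (f i)) :
      PropForm.NegFree (.iOr I f)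

/-- Finitary (ordinary) propositional formulae. -/
inductive PropForm.Finitary {V : Type} : PropForm V → Prop where
  | var (v : V) : PropForm.Finitary (.var v)
  | not (p : PropForm V) (h : PropForm.Finitary p) : PropForm.Finitary (.not p)
  | iAnd (I : Type) (hI : Finite I) (f : I → PropForm V)
      (h : ∀ i, PropForm.Finitary (f i)) : PropForm.Finitary (.iAnd I f)
  | iOr (I : Type) (hI : Finite I) (f : I → PropForm V)
      (h : ∀ i, PropForm.Finitary (f i)) : PropForm.Finitary (.iOr I f)

/-- Size of an ∞-propositional formula. -/
noncomputable def PropForm.size {V : Type} : PropForm V → Cardinal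
  | .var _ => 1
  | .not p => 1 + PropForm.size p
  | .iAnd I f => 1 + Cardinal.sum (fun i : I => PropForm.size (f i))
  | .iOr I f => 1 + Cardinal.sum (fun i : I => PropForm.size (f i))

/-- A reduction sequence `D(x̄₁, x̄₂) = (Δ₁(x̄₁), Δ₂(x̄₂), β)` over τ. -/
structure RedSeq (τ : Vocab) (r₁ r₂ : ℕ) : Type 1 where
  I : Type
  Δ₁ : I → Formula τ r₁
  Δ₂ : I → Formula τ r₂
  β : PropForm (I × Fin 2)

/-- `(A₁, A₂, ā₁, ā₂)` is a model of the reduction sequence `D`. -/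
def RedSeq.Models {τ : Vocab} {r₁ r₂ : ℕ} (D : RedSeq τ r₁ r₂) (A₁ A₂ : Struc τ)
    (a₁ : Fin r₁ → A₁.carrier) (a₂ : Fin r₂ → A₂.carrier) : Prop :=
  ∃ ζ : D.I × Fin 2 → Bool, D.β.eval ζ ∧
    (∀ i : D.I, (ζ (i, 0) = true ↔ Sat A₁ (D.Δ₁ i) a₁)) ∧
    (∀ i : D.I, (ζ (i, 1) = true ↔ Sat A₂ (D.Δ₂ i) a₂))

/-- Size of a reduction sequence. -/
noncomputable def RedSeq.size {τ : Vocab} {r₁ r₂ : ℕ} (D : RedSeq τ r₁ r₂) : Cardinal :=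
  Cardinal.sum (fun i : D.I => sizeC (D.Δ₁ i)) +
    Cardinal.sum (fun i : D.I => sizeC (D.Δ₂ i)) + D.β.size

/-- The vocabulary τ̱ = τ ∪ {P} for a new unary predicate P (represented by `none`). -/
def annotV (τ : Vocab) : Vocab where
  Rel := Option τ.Rel
  arity := fun R => match R with
    | none => 1
    | some S => τ.arity S

/-- The annotated disjoint union of two τ-structures: their disjoint union,
expanded by interpreting the new unary predicate P as the universe of the first. -/
def adu {τ : Vocab} (A₁ A₂ : Struc τ) : Struc (annotV τ) where
  carrier := A₁.carrier ⊕ A₂.carrier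
  rel := fun R => match R with
    | none => fun v => (v ⟨0, Nat.one_pos⟩).isLeft = true
    | some S => fun v =>
        (∃ w : Fin (τ.arity S) → A₁.carrier, A₁.rel S w ∧ v = fun i => Sum.inl (w i)) ∨
        (∃ w : Fin (τ.arity S) → A₂.carrier, A₂.rel S w ∧ v = fun i => Sum.inr (w i))

/-- `D` is a Feferman–Vaught decomposition of `φ(x̄₁,x̄₂)` over annotated disjoint union. -/
def FVDecompADU {τ : Vocab} {r₁ r₂ : ℕ} (φ : Formula (annotV τ) (r₁ + r₂))
    (D : RedSeq τ r₁ r₂) : Prop :=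
  ∀ (A₁ A₂ : Struc τ) (a₁ : Fin r₁ → A₁.carrier) (a₂ : Fin r₂ → A₂.carrier),
    Sat (adu A₁ A₂) φ (Fin.append (fun i => Sum.inl (a₁ i)) (fun i => Sum.inr (a₂ i)))
      ↔ D.Models A₁ A₂ a₁ a₂

/-- `D` is a Feferman–Vaught decomposition of the sentence `φ` over the binary operation `op`. -/
def FVDecompOp {τ : Vocab} (op : Struc τ → Struc τ → Struc τ) (φ : Formula τ 0)
    (D : RedSeq τ 0 0) : Prop :=
  ∀ A₁ A₂ : Struc τ, Sat (op A₁ A₂) φ emptyA ↔ D.Models A₁ A₂ emptyA emptyA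

/-- A quantifier-free scalar (σ,τ)-interpretation. -/
structure QFInterp (σ τ : Vocab) : Type 1 where
  xiU : Formula σ 1
  xiR : ∀ R : τ.Rel, Formula σ (τ.arity R)
  hU : IsQF xiU
  hR : ∀ R : τ.Rel, IsQF (xiR R)

/-- The τ-structure interpreted in a σ-structure by a quantifier-free interpretation. -/
def QFInterp.app {σ τ : Vocab} (Ξ : QFInterp σ τ) (A : Struc σ) : Struc τ where
  carrier := { a : A.carrier // Sat A Ξ.xiU (fun _ => a) }
  rel := fun R v => Sat A (Ξ.xiR R) (fun i => (v i).1)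

/-- The quantifier-free sum-like binary operation defined by a (τ̱,τ)-interpretation. -/
def sumLike {τ : Vocab} (Ξ : QFInterp (annotV τ) τ) (A₁ A₂ : Struc τ) : Struc τ :=
  Ξ.app (adu A₁ A₂)


/-- Relabelling of free variables. -/
def relabel {τ : Vocab} : ∀ {m n : ℕ}, (Fin m → Fin n) → Formula τ m → Formula τ n
  | _, _, _, .tru => .tru
  | _, _, _, .fls => .fls
  | _, _, g, .rel R ts => .rel R (fun i => g (ts i))
  | _, _, g, .nrel R ts => .nrel R (fun i => g (ts i))
  | _, _, g, .eq i j => .eq (g i) (g j)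
  | _, _, g, .neq i j => .neq (g i) (g j)
  | _, _, g, .iAnd I f => .iAnd I (fun i => relabel g (f i))
  | _, _, g, .iOr I f => .iOr I (fun i => relabel g (f i))
  | _, _, g, .ex φ => .ex (relabel (Fin.snoc (fun i => Fin.castSucc (g i)) (Fin.last _)) φ)
  | _, _, g, .all φ => .all (relabel (Fin.snoc (fun i => Fin.castSucc (g i)) (Fin.last _)) φ)

/-- Negation, in negation normal form. -/
def nnfNeg {τ : Vocab} : ∀ {n : ℕ}, Formula τ n → Formula τ n
  | _, .tru => .fls
  | _, .fls => .tru
  | _, .rel R ts => .nrel R ts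
  | _, .nrel R ts => .rel R ts
  | _, .eq i j => .neq i j
  | _, .neq i j => .eq i j
  | _, .iAnd I f => .iOr I (fun i => nnfNeg (f i))
  | _, .iOr I f => .iAnd I (fun i => nnfNeg (f i))
  | _, .ex φ => .all (nnfNeg φ)
  | _, .all φ => .ex (nnfNeg φ)

/-- Finite conjunction of a tuple of formulae. -/
def finAnd {τ : Vocab} {n : ℕ} : ∀ {r : ℕ}, (Fin r → Formula τ n) → Formula τ n
  | 0, _ => .tru
  | r+1, f => (finAnd (fun i => f (Fin.castSucc i))).and (f (Fin.last r))

/-- A block of `k` existential quantifiers. -/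
def exBlock {τ : Vocab} : ∀ (k : ℕ) {r : ℕ}, Formula τ (r + k) → Formula τ r
  | 0, _, φ => φ
  | k+1, _, φ => exBlock k (Formula.ex φ)

/-- A block of `k` universal quantifiers. -/
def allBlock {τ : Vocab} : ∀ (k : ℕ) {r : ℕ}, Formula τ (r + k) → Formula τ r
  | 0, _, φ => φ
  | k+1, _, φ => allBlock k (Formula.all φ)

mutual
/-- The class tΣ_{(n,k)}: tΣ_n formulae all of whose quantifier blocks have length exactly k. -/
inductive SigNK (τ : Vocab) (k : ℕ) : ℕ → ∀ {r : ℕ}, Formula τ r → Prop where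
  | qf {r : ℕ} {φ : Formula τ r} : IsQF φ → SigNK τ k 0 φ
  | blk {r n : ℕ} (hn : 0 < n) (I : Type) (hI : Finite I) (f : I → Formula τ (r + k))
      (n' : I → ℕ) (hlt : ∀ i, n' i < n) (h : ∀ i, PiNK τ k (n' i) (f i)) :
      SigNK τ k n (exBlock k (Formula.iAnd I f))
/-- The class tΠ_{(n,k)}: tΠ_n formulae all of whose quantifier blocks have length exactly k. -/
inductive PiNK (τ : Vocab) (k : ℕ) : ℕ → ∀ {r : ℕ}, Formula τ r → Prop where
  | qf {r : ℕ} {φ : Formula τ r} : IsQF φ → PiNK τ k 0 φ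
  | blk {r n : ℕ} (hn : 0 < n) (I : Type) (hI : Finite I) (f : I → Formula τ (r + k))
      (n' : I → ℕ) (hlt : ∀ i, n' i < n) (h : ∀ i, SigNK τ k (n' i) (f i)) :
      PiNK τ k n (allBlock k (Formula.iOr I f))
end

/-- Partial isomorphism condition on a pair of tuples. -/
def PIso {τ : Vocab} (A₁ A₂ : Struc τ) (r : ℕ)
    (a₁ : Fin r → A₁.carrier) (a₂ : Fin r → A₂.carrier) : Prop :=
  (∀ i j : Fin r, a₁ i = a₁ j ↔ a₂ i = a₂ j) ∧
  (∀ (R : τ.Rel) (ts : Fin (τ.arity R) → Fin r),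
      A₁.rel R (fun l => a₁ (ts l)) ↔ A₂.rel R (fun l => a₂ (ts l)))

/-- The Duplicator has a winning strategy in the (n,k)-prefix game on the ordered pair
((A₁,ā₁),(A₂,ā₂)): in odd rounds the Spoiler picks a k-tuple in A₁ (and the Duplicator
answers in A₂), in even rounds the roles of the structures are swapped; the Duplicator wins
a play if the chosen tuples collectively form a partial isomorphism. -/
def DWinPrefix {τ : Vocab} (k : ℕ) : ℕ → (A₁ A₂ : Struc τ) → (r : ℕ) →
    (Fin r → A₁.carrier) → (Fin r → A₂.carrier) → Prop
  | 0, A₁, A₂, r, a₁, a₂ => PIso A₁ A₂ r a₁ a₂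
  | n+1, A₁, A₂, r, a₁, a₂ =>
      ∀ b₁ : Fin k → A₁.carrier, ∃ b₂ : Fin k → A₂.carrier,
        DWinPrefix k n A₂ A₁ (r + k) (Fin.append a₂ b₂) (Fin.append a₁ b₁)

/-- The Duplicator has a winning strategy in the (n,k)-tree-prefix game on the set
{(A₁,ā₁),(A₂,ā₂)}: in the first round the Spoiler picks a k-tuple in either structure, and
thereafter in the structure in which the Duplicator chose in the previous round. -/
def DWinTree {τ : Vocab} (k : ℕ) : ℕ → (A₁ A₂ : Struc τ) → (r : ℕ) →
    (Fin r → A₁.carrier) → (Fin r → A₂.carrier) → Prop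
  | 0, A₁, A₂, r, a₁, a₂ => PIso A₁ A₂ r a₁ a₂
  | n+1, A₁, A₂, r, a₁, a₂ =>
      (∀ b₁ : Fin k → A₁.carrier, ∃ b₂ : Fin k → A₂.carrier,
        DWinPrefix k n A₂ A₁ (r + k) (Fin.append a₂ b₂) (Fin.append a₁ b₁)) ∧
      (∀ b₂ : Fin k → A₂.carrier, ∃ b₁ : Fin k → A₁.carrier,
        DWinPrefix k n A₁ A₂ (r + k) (Fin.append a₁ b₁) (Fin.append a₂ b₂))

/-- (A₁,ā₁) ⇛_{(n,k)} (A₂,ā₂) : every tΣ_{(n,k)} formula true of (A₁,ā₁) is true of (A₂,ā₂). -/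
def TransferNK {τ : Vocab} (n k : ℕ) (A₁ A₂ : Struc τ) (r : ℕ)
    (a₁ : Fin r → A₁.carrier) (a₂ : Fin r → A₂.carrier) : Prop :=
  ∀ φ : Formula τ r, SigNK τ k n φ → Sat A₁ φ a₁ → Sat A₂ φ a₂

/-- (A₁,ā₁) ≡_{(n,k)} (A₂,ā₂) : agreement on all tΣ_{(n,k)} formulae. -/
def EquivNK {τ : Vocab} (n k : ℕ) (A₁ A₂ : Struc τ) (r : ℕ)
    (a₁ : Fin r → A₁.carrier) (a₂ : Fin r → A₂.carrier) : Prop :=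
  ∀ φ : Formula τ r, SigNK τ k n φ → (Sat A₁ φ a₁ ↔ Sat A₂ φ a₂)

namespace QFInterp

variable {σ τ : Vocab}

/-- The universe formula ξ_U applied at variable `i`. -/
def uAt (Ξ : QFInterp σ τ) {n : ℕ} (i : Fin n) : Formula σ n :=
  relabel (fun _ : Fin 1 => i) Ξ.xiU

/-- The universe formula ξ_U applied at the last (just-quantified) variable. -/
def uLast (Ξ : QFInterp σ τ) {n : ℕ} : Formula σ (n+1) :=
  Ξ.uAt (Fin.last n)

/-- Close a pending quantifier-block guard. -/
def closeG {n : ℕ} : Option (Bool × Formula σ n) → Formula σ n → Formula σ n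
  | none, r => r
  | some (true, g), r => g.and r
  | some (false, g), r => g.or r

/-- Block-wise translation Ξ(φ) of a formula under a quantifier-free interpretation,
with an accumulator carrying the pending universe-guard of the current quantifier block:
Ξ(R(z̄)) = ξ_R(z̄) ∧ ⋀ᵢ ξ_U(zᵢ); Ξ(¬R(z̄)) = ¬ξ_R(z̄) ∧ ⋀ᵢ ξ_U(zᵢ) (¬ξ_R in NNF);
Ξ commutes with conjunctions and disjunctions; Ξ(∃x̄ ⋀ᵢφᵢ) = ∃x̄(⋀ⱼ ξ_U(xⱼ) ∧ ⋀ᵢΞ(φᵢ));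
Ξ(∀x̄ ⋁ᵢφᵢ) = ∀x̄((⋁ⱼ ¬ξ_U(xⱼ)) ∨ ⋁ᵢΞ(φᵢ)) (¬ξ_U in NNF). -/
def trA (Ξ : QFInterp σ τ) : ∀ {n : ℕ}, Option (Bool × Formula σ n) → Formula τ n → Formula σ n
  | _, mode, .tru => closeG mode .tru
  | _, mode, .fls => closeG mode .fls
  | _, mode, .rel R ts =>
      closeG mode ((relabel ts (Ξ.xiR R)).and (finAnd (fun i => Ξ.uAt (ts i))))
  | _, mode, .nrel R ts =>
      closeG mode ((nnfNeg (relabel ts (Ξ.xiR R))).and (finAnd (fun i => Ξ.uAt (ts i))))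
  | _, mode, .eq i j => closeG mode ((Formula.eq i j).and ((Ξ.uAt i).and (Ξ.uAt j)))
  | _, mode, .neq i j => closeG mode ((Formula.neq i j).and ((Ξ.uAt i).and (Ξ.uAt j)))
  | _, some (true, g), .iAnd I f =>
      .iAnd (Option I) (fun o => o.elim g (fun i => Ξ.trA none (f i)))
  | _, some (false, g), .iOr I f =>
      .iOr (Option I) (fun o => o.elim g (fun i => Ξ.trA none (f i)))
  | _, mode, .iAnd I f => closeG mode (.iAnd I (fun i => Ξ.trA none (f i)))
  | _, mode, .iOr I f => closeG mode (.iOr I (fun i => Ξ.trA none (f i)))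
  | _, some (true, g), .ex φ =>
      .ex (Ξ.trA (some (true, (relabel Fin.castSucc g).and Ξ.uLast)) φ)
  | _, some (false, g), .all φ =>
      .all (Ξ.trA (some (false, (relabel Fin.castSucc g).or (nnfNeg Ξ.uLast))) φ)
  | _, mode, .ex φ => closeG mode (.ex (Ξ.trA (some (true, Ξ.uLast)) φ))
  | _, mode, .all φ => closeG mode (.all (Ξ.trA (some (false, nnfNeg Ξ.uLast)) φ))

/-- The translation Ξ(φ) of a formula. -/
def translate (Ξ : QFInterp σ τ) {n : ℕ} (φ : Formula τ n) : Formula σ n :=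
  Ξ.trA none φ

/-- The size |Ξ| of an interpretation: the sum of the sizes of its formulae. -/
noncomputable def size [Fintype τ.Rel] (Ξ : QFInterp σ τ) : Cardinal :=
  sizeC Ξ.xiU + ∑ R : τ.Rel, sizeC (Ξ.xiR R)

end QFInterp


section Aux

variable {τ : Vocab}

lemma sat_and {A : Struc τ} {n} (φ ψ : Formula τ n) (v : Fin n → A.carrier) :
    Sat A (φ.and ψ) v ↔ Sat A φ v ∧ Sat A ψ v := by
  simp only [Formula.and, Sat, Bool.forall_bool, if_true, if_false]
  tauto

lemma sat_or {A : Struc τ} {n} (φ ψ : Formula τ n) (v : Fin n → A.carrier) :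
    Sat A (φ.or ψ) v ↔ Sat A φ v ∨ Sat A ψ v := by
  simp only [Formula.or, Sat, Bool.exists_bool, if_true, if_false]
  tauto

lemma isQF_and {n} {φ ψ : Formula τ n} (h1 : IsQF φ) (h2 : IsQF ψ) : IsQF (φ.and ψ) := by
  refine IsQF.iAnd _ inferInstance _ (fun b => ?_)
  cases b <;> simp [h1, h2]

lemma isQF_nnfNeg {n} {φ : Formula τ n} (h : IsQF φ) : IsQF (nnfNeg φ) := by
  induction h with
  | tru => exact .fls
  | fls => exact .tru
  | rel R ts => exact .nrel R ts
  | nrel R ts => exact .rel R ts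
  | eq i j => exact .neq i j
  | neq i j => exact .eq i j
  | iAnd I hI f h ih => exact .iOr I hI _ ih
  | iOr I hI f h ih => exact .iAnd I hI _ ih

lemma sat_nnfNeg {A : Struc τ} : ∀ {n} (φ : Formula τ n) (v : Fin n → A.carrier),
    Sat A (nnfNeg φ) v ↔ ¬ Sat A φ v := by
  intro n φ
  induction φ with
  | tru => intro v; simp [nnfNeg, Sat]
  | fls => intro v; simp [nnfNeg, Sat]
  | rel R ts => intro v; simp [nnfNeg, Sat]
  | nrel R ts => intro v; simp [nnfNeg, Sat]
  | eq i j => intro v; simp [nnfNeg, Sat]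
  | neq i j => intro v; simp [nnfNeg, Sat]
  | iAnd I f ih => intro v; simp [nnfNeg, Sat, ih]
  | iOr I f ih => intro v; simp [nnfNeg, Sat, ih]
  | ex φ ih => intro v; simp [nnfNeg, Sat, ih]
  | all φ ih => intro v; simp [nnfNeg, Sat, ih]

lemma rank_nnfNeg : ∀ {n} (φ : Formula τ n), rank (nnfNeg φ) = rank φ := by
  intro n φ
  induction φ with
  | iAnd I f ih => simp [nnfNeg, rank, ih]
  | iOr I f ih => simp [nnfNeg, rank, ih]
  | ex φ ih => simp [nnfNeg, rank, ih]
  | all φ ih => simp [nnfNeg, rank, ih]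
  | _ => simp [nnfNeg, rank]

lemma rank_qf {n} {φ : Formula τ n} (h : IsQF φ) : rank φ = 0 := by
  induction h with
  | iAnd I hI f h ih =>
    simp only [rank]
    exact le_antisymm (ciSup_le' fun i => (ih i).le) zero_le
  | iOr I hI f h ih =>
    simp only [rank]
    exact le_antisymm (ciSup_le' fun i => (ih i).le) zero_le
  | _ => simp [rank]

lemma sat_relabel {A : Struc τ} : ∀ {m n} (g : Fin m → Fin n) (φ : Formula τ m)
    (v : Fin n → A.carrier), Sat A (relabel g φ) v ↔ Sat A φ (v ∘ g) := by
  intro m n g φ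
  induction φ generalizing n with
  | tru => intro v; simp [relabel, Sat]
  | fls => intro v; simp [relabel, Sat]
  | rel R ts => intro v; simp [relabel, Sat]
  | nrel R ts => intro v; simp [relabel, Sat]
  | eq i j => intro v; simp [relabel, Sat]
  | neq i j => intro v; simp [relabel, Sat]
  | iAnd I f ih => intro v; simp [relabel, Sat, ih]
  | iOr I f ih => intro v; simp [relabel, Sat, ih]
  | ex φ ih =>
    intro v
    simp only [relabel, Sat, ih]
    constructor <;> rintro ⟨a, ha⟩ <;> refine ⟨a, ?_⟩ <;>
      [ (convert ha using 2) ; (convert ha using 2) ] <;>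
      funext i <;>
      refine Fin.lastCases ?_ (fun j => ?_) i <;>
      simp [Fin.snoc_last, Fin.snoc_castSucc, Function.comp]
  | all φ ih =>
    intro v
    simp only [relabel, Sat, ih]
    constructor <;> intro h a <;> [ (have := h a) ; (have := h a) ] <;>
      (convert this using 2) <;>
      funext i <;>
      refine Fin.lastCases ?_ (fun j => ?_) i <;>
      simp [Fin.snoc_last, Fin.snoc_castSucc, Function.comp]

lemma isQF_relabel : ∀ {m n} (g : Fin m → Fin n) {φ : Formula τ m},
    IsQF φ → IsQF (relabel g φ) := by
  intro m n g φ h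
  induction h with
  | tru => exact .tru
  | fls => exact .fls
  | rel R ts => exact .rel _ _
  | nrel R ts => exact .nrel _ _
  | eq i j => exact .eq _ _
  | neq i j => exact .neq _ _
  | iAnd I hI f h ih => exact .iAnd I hI _ ih
  | iOr I hI f h ih => exact .iOr I hI _ ih

lemma rank_relabel : ∀ {m n} (g : Fin m → Fin n) (φ : Formula τ m),
    rank (relabel g φ) = rank φ := by
  intro m n g φ
  induction φ generalizing n with
  | iAnd I f ih => simp [relabel, rank, ih]
  | iOr I f ih => simp [relabel, rank, ih]
  | ex φ ih => simp [relabel, rank, ih]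
  | all φ ih => simp [relabel, rank, ih]
  | _ => simp [relabel, rank]

/-- Monotonicity of the classes in κ. -/
lemma tSigma_tPi_mono {κ κ' : Cardinal} (hκ : κ ≤ κ') :
    ∀ {n} (φ : Formula τ n) (lam : Ordinal),
      (TSigma τ κ lam φ → TSigma τ κ' lam φ) ∧ (TPi τ κ lam φ → TPi τ κ' lam φ) := by
  intro n φ
  induction φ with
  | iAnd I f ih =>
    intro lam
    constructor
    · intro h
      cases h with
      | qf h => exact .qf h
      | conj I f hI lam' hlt h =>
        exact .conj I f (hI.trans_le hκ) lam' hlt (fun i => ((ih i) (lam' i)).2 (h i))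
    · intro h
      cases h with
      | qf h => exact .qf h
  | iOr I f ih =>
    intro lam
    constructor
    · intro h; cases h with | qf h => exact .qf h
    · intro h
      cases h with
      | qf h => exact .qf h
      | disj I f hI lam' hlt h =>
        exact .disj I f (hI.trans_le hκ) lam' hlt (fun i => ((ih i) (lam' i)).1 (h i))
  | ex φ ih =>
    intro lam
    constructor
    · intro h
      cases h with
      | qf h => cases h
      | ex h => exact .ex ((ih lam).1 h)
    · intro h; cases h with | qf h => cases h
  | all φ ih =>
    intro lam
    constructor
    · intro h; cases h with | qf h => cases h
    · intro h
      cases h with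
      | qf h => cases h
      | all h => exact .all ((ih lam).2 h)
  | _ =>
    intro lam
    constructor <;> intro h <;> cases h <;> first
      | exact .qf (by constructor)
      | (rename_i h; exact .qf h)

open Classical in
lemma forall_or_iff_exists_bool {J : Type} (P Q : J → Prop) :
    (∀ j, P j ∨ Q j) ↔ ∃ S : J → Bool, (∀ j, S j = true → P j) ∧ (∀ j, S j = false → Q j) := by
  constructor
  · intro h
    refine ⟨fun j => if P j then true else false, fun j hj => ?_, fun j hj => ?_⟩
    · by_cases hp : P j
      · exact hp
      · simp [hp] at hj
    · by_cases hp : P j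
      · simp [hp] at hj
      · exact (h j).resolve_left hp
  · rintro ⟨S, h1, h2⟩ j
    cases hS : S j with
    | true => exact Or.inl (h1 j hS)
    | false => exact Or.inr (h2 j hS)

open Classical in
lemma exists_and_iff_forall_bool {J : Type} (P Q : J → Prop) :
    (∃ j, P j ∧ Q j) ↔ ∀ S : J → Bool, (∃ j, S j = true ∧ P j) ∨ (∃ j, S j = false ∧ Q j) := by
  constructor
  · rintro ⟨j, hP, hQ⟩ S
    cases hS : S j with
    | true => exact Or.inl ⟨j, hS, hP⟩
    | false => exact Or.inr ⟨j, hS, hQ⟩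
  · intro h
    have := h (fun j => if P j then false else true)
    rcases this with ⟨j, hS, hP⟩ | ⟨j, hS, hQ⟩
    · by_cases hp : P j
      · simp [hp] at hS
      · exact absurd hP hp
    · by_cases hp : P j
      · exact ⟨j, hp, hQ⟩
      · simp [hp] at hS

/-- Mixed assignment into the disjoint union. -/
def mix {A₁ A₂ : Struc τ} {m n₁ n₂ : ℕ} (p : Fin m → Fin n₁ ⊕ Fin n₂)
    (a₁ : Fin n₁ → A₁.carrier) (a₂ : Fin n₂ → A₂.carrier) :
    Fin m → A₁.carrier ⊕ A₂.carrier :=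
  fun i => (p i).elim (fun j => Sum.inl (a₁ j)) (fun j => Sum.inr (a₂ j))

/-- The guard predicate: membership in the interpreted universe. -/
def Guard (Ξ : QFInterp (annotV τ) τ) (A₁ A₂ : Struc τ) (x : A₁.carrier ⊕ A₂.carrier) : Prop :=
  Sat (adu A₁ A₂) Ξ.xiU (fun _ => x)

/-- Mixed assignment into the interpreted structure. -/
def Vm (Ξ : QFInterp (annotV τ) τ) {A₁ A₂ : Struc τ} {m n₁ n₂ : ℕ}
    (p : Fin m → Fin n₁ ⊕ Fin n₂)
    (a₁ : Fin n₁ → A₁.carrier) (a₂ : Fin n₂ → A₂.carrier)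
    (h₁ : ∀ j, Guard Ξ A₁ A₂ (Sum.inl (a₁ j)))
    (h₂ : ∀ j, Guard Ξ A₁ A₂ (Sum.inr (a₂ j))) :
    Fin m → (sumLike Ξ A₁ A₂).carrier :=
  fun i => (p i).rec (fun j => ⟨Sum.inl (a₁ j), h₁ j⟩) (fun j => ⟨Sum.inr (a₂ j), h₂ j⟩)

lemma Vm_val (Ξ : QFInterp (annotV τ) τ) {A₁ A₂ : Struc τ} {m n₁ n₂ : ℕ}
    (p : Fin m → Fin n₁ ⊕ Fin n₂) (a₁ : Fin n₁ → A₁.carrier) (a₂ : Fin n₂ → A₂.carrier)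
    (h₁ h₂) (i : Fin m) : (Vm Ξ p a₁ a₂ h₁ h₂ i).1 = mix p a₁ a₂ i := by
  unfold Vm mix
  cases p i <;> rfl

lemma rel_some_case {m n₁ n₂ : ℕ} (S : τ.Rel)
    (ts : Fin ((annotV τ).arity (some S)) → Fin m) (p : Fin m → Fin n₁ ⊕ Fin n₂) :
    ∃ (K : Type) (γ₁ : K → Formula τ n₁) (γ₂ : K → Formula τ n₂),
      (∀ k, IsQF (γ₁ k) ∧ IsQF (γ₂ k)) ∧
      ∀ (A₁ A₂ : Struc τ) (a₁ : Fin n₁ → A₁.carrier) (a₂ : Fin n₂ → A₂.carrier),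
        (Sat (adu A₁ A₂) (Formula.rel (some S) ts) (mix p a₁ a₂) ↔
          ∃ k, Sat A₁ (γ₁ k) a₁ ∧ Sat A₂ (γ₂ k) a₂) := by
  have hsat : ∀ (A₁ A₂ : Struc τ) a₁ a₂,
      Sat (adu A₁ A₂) (Formula.rel (some S) ts) (mix p a₁ a₂) ↔
      ((∃ w, A₁.rel S w ∧ (fun i => mix p a₁ a₂ (ts i)) = fun i => Sum.inl (w i)) ∨
       (∃ w, A₂.rel S w ∧ (fun i => mix p a₁ a₂ (ts i)) = fun i => Sum.inr (w i))) := by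
    intro A₁ A₂ a₁ a₂; simp [Sat, adu]
  rcases isEmpty_or_nonempty (Fin (τ.arity S)) with hE | hNE
  · refine ⟨Bool, fun b => cond b (Formula.rel S (fun i => isEmptyElim i)) .tru,
      fun b => cond b .tru (Formula.rel S (fun i => isEmptyElim i)),
      fun b => by cases b <;> exact ⟨by first | exact .tru | exact .rel _ _,
        by first | exact .tru | exact .rel _ _⟩, fun A₁ A₂ a₁ a₂ => ?_⟩
    rw [hsat]
    have hw : ∀ (α : Type) (w w' : Fin (τ.arity S) → α), w = w' :=
      fun α w w' => funext fun i => isEmptyElim i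
    constructor
    · rintro (⟨w, hw1, -⟩ | ⟨w, hw2, -⟩)
      · refine ⟨true, ?_, trivial⟩
        show A₁.rel S _
        rw [hw _ (fun i => a₁ (isEmptyElim i)) w]
        exact hw1
      · refine ⟨false, trivial, ?_⟩
        show A₂.rel S _
        rw [hw _ (fun i => a₂ (isEmptyElim i)) w]
        exact hw2
    · rintro ⟨b, h1, h2⟩
      cases b
      · exact Or.inr ⟨_, h2, hw _ _ _⟩
      · exact Or.inl ⟨_, h1, hw _ _ _⟩
  · by_cases hL : ∀ i, ∃ j, p (ts i) = Sum.inl j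
    · choose q hq using hL
      refine ⟨PUnit, fun _ => Formula.rel S q, fun _ => .tru,
        fun _ => ⟨.rel _ _, .tru⟩, fun A₁ A₂ a₁ a₂ => ?_⟩
      rw [hsat]
      simp only [Sat]
      constructor
      · rintro (⟨w, hw1, heq⟩ | ⟨w, hw2, heq⟩)
        · refine ⟨⟨⟩, ?_, trivial⟩
          convert hw1 using 1
          funext i
          have := congrFun heq i
          simp [mix, hq i] at this
          exact this
        · obtain ⟨i0⟩ := hNE
          have := congrFun heq i0
          simp [mix, hq i0] at this
      · rintro ⟨_, h1, -⟩
        exact Or.inl ⟨_, h1, funext fun i => by simp [mix, hq i]⟩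
    · by_cases hR : ∀ i, ∃ j, p (ts i) = Sum.inr j
      · choose q hq using hR
        refine ⟨PUnit, fun _ => .tru, fun _ => Formula.rel S q,
          fun _ => ⟨.tru, .rel _ _⟩, fun A₁ A₂ a₁ a₂ => ?_⟩
        rw [hsat]
        simp only [Sat]
        constructor
        · rintro (⟨w, hw1, heq⟩ | ⟨w, hw2, heq⟩)
          · obtain ⟨i0⟩ := hNE
            have := congrFun heq i0
            simp [mix, hq i0] at this
          · refine ⟨⟨⟩, trivial, ?_⟩
            convert hw2 using 1
            funext i
            have := congrFun heq i
            simp [mix, hq i] at this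
            exact this
        · rintro ⟨_, -, h2⟩
          exact Or.inr ⟨_, h2, funext fun i => by simp [mix, hq i]⟩
      · push_neg at hL hR
        obtain ⟨i1, h1⟩ := hL
        obtain ⟨i2, h2⟩ := hR
        rcases hp1 : p (ts i1) with j | j
        · exact absurd hp1 (h1 j)
        · rcases hp2 : p (ts i2) with j' | j'
          · refine ⟨Empty, fun k => k.elim, fun k => k.elim, fun k => k.elim,
              fun A₁ A₂ a₁ a₂ => ?_⟩
            rw [hsat]
            constructor
            · rintro (⟨w, -, heq⟩ | ⟨w, -, heq⟩)
              · have := congrFun heq i1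
                simp [mix, hp1] at this
              · have := congrFun heq i2
                simp [mix, hp2] at this
            · rintro ⟨⟨⟩, -⟩
          · exact absurd hp2 (h2 j')

lemma nrel_some_case {m n₁ n₂ : ℕ} (S : τ.Rel)
    (ts : Fin ((annotV τ).arity (some S)) → Fin m) (p : Fin m → Fin n₁ ⊕ Fin n₂) :
    ∃ (K : Type) (γ₁ : K → Formula τ n₁) (γ₂ : K → Formula τ n₂),
      (∀ k, IsQF (γ₁ k) ∧ IsQF (γ₂ k)) ∧
      ∀ (A₁ A₂ : Struc τ) (a₁ : Fin n₁ → A₁.carrier) (a₂ : Fin n₂ → A₂.carrier),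
        (Sat (adu A₁ A₂) (Formula.nrel (some S) ts) (mix p a₁ a₂) ↔
          ∃ k, Sat A₁ (γ₁ k) a₁ ∧ Sat A₂ (γ₂ k) a₂) := by
  have hsat : ∀ (A₁ A₂ : Struc τ) a₁ a₂,
      Sat (adu A₁ A₂) (Formula.nrel (some S) ts) (mix p a₁ a₂) ↔
      (¬(∃ w, A₁.rel S w ∧ (fun i => mix p a₁ a₂ (ts i)) = fun i => Sum.inl (w i)) ∧
       ¬(∃ w, A₂.rel S w ∧ (fun i => mix p a₁ a₂ (ts i)) = fun i => Sum.inr (w i))) := by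
    intro A₁ A₂ a₁ a₂
    simp only [Sat, adu, not_or]
  rcases isEmpty_or_nonempty (Fin (τ.arity S)) with hE | hNE
  · have hw : ∀ (α : Type) (w w' : Fin (τ.arity S) → α), w = w' :=
      fun α w w' => funext fun i => isEmptyElim i
    refine ⟨PUnit, fun _ => Formula.nrel S (fun i => isEmptyElim i),
      fun _ => Formula.nrel S (fun i => isEmptyElim i),
      fun _ => ⟨.nrel _ _, .nrel _ _⟩, fun A₁ A₂ a₁ a₂ => ?_⟩
    rw [hsat]
    simp only [Sat]
    constructor
    · rintro ⟨hnl, hnr⟩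
      exact ⟨⟨⟩, fun hr => hnl ⟨_, hr, hw _ _ _⟩, fun hr => hnr ⟨_, hr, hw _ _ _⟩⟩
    · rintro ⟨_, hn1, hn2⟩
      constructor
      · rintro ⟨w, hr, -⟩
        refine hn1 ?_
        rw [hw _ (fun i => a₁ (isEmptyElim i)) w]
        exact hr
      · rintro ⟨w, hr, -⟩
        refine hn2 ?_
        rw [hw _ (fun i => a₂ (isEmptyElim i)) w]
        exact hr
  · by_cases hL : ∀ i, ∃ j, p (ts i) = Sum.inl j
    · choose q hq using hL
      obtain ⟨i0⟩ := hNE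
      refine ⟨PUnit, fun _ => Formula.nrel S q, fun _ => .tru,
        fun _ => ⟨.nrel _ _, .tru⟩, fun A₁ A₂ a₁ a₂ => ?_⟩
      rw [hsat]
      simp only [Sat]
      constructor
      · rintro ⟨hnl, -⟩
        exact ⟨⟨⟩, fun hr => hnl ⟨_, hr, funext fun i => by simp [mix, hq i]⟩, trivial⟩
      · rintro ⟨_, hn1, -⟩
        constructor
        · rintro ⟨w, hr, heq⟩
          refine hn1 ?_
          convert hr using 1
          funext i
          have := congrFun heq i
          simp [mix, hq i] at this
          exact this
        · rintro ⟨w, -, heq⟩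
          have := congrFun heq i0
          simp [mix, hq i0] at this
    · by_cases hR : ∀ i, ∃ j, p (ts i) = Sum.inr j
      · choose q hq using hR
        obtain ⟨i0⟩ := hNE
        refine ⟨PUnit, fun _ => .tru, fun _ => Formula.nrel S q,
          fun _ => ⟨.tru, .nrel _ _⟩, fun A₁ A₂ a₁ a₂ => ?_⟩
        rw [hsat]
        simp only [Sat]
        constructor
        · rintro ⟨-, hnr⟩
          exact ⟨⟨⟩, trivial, fun hr => hnr ⟨_, hr, funext fun i => by simp [mix, hq i]⟩⟩
        · rintro ⟨_, -, hn2⟩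
          constructor
          · rintro ⟨w, -, heq⟩
            have := congrFun heq i0
            simp [mix, hq i0] at this
          · rintro ⟨w, hr, heq⟩
            refine hn2 ?_
            convert hr using 1
            funext i
            have := congrFun heq i
            simp [mix, hq i] at this
            exact this
      · push_neg at hL hR
        obtain ⟨i1, h1⟩ := hL
        obtain ⟨i2, h2⟩ := hR
        rcases hp1 : p (ts i1) with j | j
        · exact absurd hp1 (h1 j)
        · rcases hp2 : p (ts i2) with j' | j'
          · refine ⟨PUnit, fun _ => .tru, fun _ => .tru,
              fun _ => ⟨.tru, .tru⟩, fun A₁ A₂ a₁ a₂ => ?_⟩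
            rw [hsat]
            simp only [Sat]
            constructor
            · intro; exact ⟨⟨⟩, trivial, trivial⟩
            · rintro -
              constructor
              · rintro ⟨w, -, heq⟩
                have := congrFun heq i1
                simp [mix, hp1] at this
              · rintro ⟨w, -, heq⟩
                have := congrFun heq i2
                simp [mix, hp2] at this
          · exact absurd hp2 (h2 j')

/-- Decomposition of QF formulae over the annotated disjoint union. -/
lemma qf_decomp {m n₁ n₂ : ℕ} (ψ : Formula (annotV τ) m) (hψ : IsQF ψ)
    (p : Fin m → Fin n₁ ⊕ Fin n₂) :
    ∃ (K : Type) (γ₁ : K → Formula τ n₁) (γ₂ : K → Formula τ n₂),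
      (∀ k, IsQF (γ₁ k) ∧ IsQF (γ₂ k)) ∧
      ∀ (A₁ A₂ : Struc τ) (a₁ : Fin n₁ → A₁.carrier) (a₂ : Fin n₂ → A₂.carrier),
        (Sat (adu A₁ A₂) ψ (mix p a₁ a₂) ↔ ∃ k, Sat A₁ (γ₁ k) a₁ ∧ Sat A₂ (γ₂ k) a₂) := by
  induction hψ with
  | tru =>
    exact ⟨PUnit, fun _ => .tru, fun _ => .tru, fun _ => ⟨.tru, .tru⟩,
      fun A₁ A₂ a₁ a₂ => by simp [Sat]⟩
  | fls =>
    exact ⟨Empty, fun k => k.elim, fun k => k.elim, fun k => k.elim,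
      fun A₁ A₂ a₁ a₂ => by simp [Sat]⟩
  | eq i j =>
    rcases hi : p i with ji | ji <;> rcases hj : p j with jj | jj
    · exact ⟨PUnit, fun _ => .eq ji jj, fun _ => .tru, fun _ => ⟨.eq _ _, .tru⟩,
        fun A₁ A₂ a₁ a₂ => by
          simp [Sat, mix, hi, hj]
          exact Sum.inl_injective.eq_iff⟩
    · exact ⟨Empty, fun k => k.elim, fun k => k.elim, fun k => k.elim,
        fun A₁ A₂ a₁ a₂ => by simp [Sat, mix, hi, hj, Sum.inl.injEq, Sum.inr.injEq, Subtype.mk.injEq]⟩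
    · exact ⟨Empty, fun k => k.elim, fun k => k.elim, fun k => k.elim,
        fun A₁ A₂ a₁ a₂ => by simp [Sat, mix, hi, hj, Sum.inl.injEq, Sum.inr.injEq, Subtype.mk.injEq]⟩
    · exact ⟨PUnit, fun _ => .tru, fun _ => .eq ji jj, fun _ => ⟨.tru, .eq _ _⟩,
        fun A₁ A₂ a₁ a₂ => by
          simp [Sat, mix, hi, hj]
          exact Sum.inr_injective.eq_iff⟩
  | neq i j =>
    rcases hi : p i with ji | ji <;> rcases hj : p j with jj | jj
    · exact ⟨PUnit, fun _ => .neq ji jj, fun _ => .tru, fun _ => ⟨.neq _ _, .tru⟩,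
        fun A₁ A₂ a₁ a₂ => by
          simp [Sat, mix, hi, hj]
          exact not_congr Sum.inl_injective.eq_iff⟩
    · exact ⟨PUnit, fun _ => .tru, fun _ => .tru, fun _ => ⟨.tru, .tru⟩,
        fun A₁ A₂ a₁ a₂ => by simp [Sat, mix, hi, hj, Sum.inl.injEq, Sum.inr.injEq, Subtype.mk.injEq]; exact Sum.inl_ne_inr⟩
    · exact ⟨PUnit, fun _ => .tru, fun _ => .tru, fun _ => ⟨.tru, .tru⟩,
        fun A₁ A₂ a₁ a₂ => by simp [Sat, mix, hi, hj, Sum.inl.injEq, Sum.inr.injEq, Subtype.mk.injEq]; exact Sum.inr_ne_inl⟩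
    · exact ⟨PUnit, fun _ => .tru, fun _ => .neq ji jj, fun _ => ⟨.tru, .neq _ _⟩,
        fun A₁ A₂ a₁ a₂ => by
          simp [Sat, mix, hi, hj]
          exact not_congr Sum.inr_injective.eq_iff⟩
  | rel R ts =>
    cases R with
    | none =>
      rcases h0 : p (ts ⟨0, Nat.one_pos⟩) with j0 | j0
      · exact ⟨PUnit, fun _ => .tru, fun _ => .tru, fun _ => ⟨.tru, .tru⟩,
          fun A₁ A₂ a₁ a₂ => by
            simp only [Sat, adu, mix]
            rw [show p (ts ⟨0, Nat.one_pos⟩) = _ from h0]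
            simp⟩
      · exact ⟨Empty, fun k => k.elim, fun k => k.elim, fun k => k.elim,
          fun A₁ A₂ a₁ a₂ => by
            simp only [Sat, adu, mix]
            rw [show p (ts ⟨0, Nat.one_pos⟩) = _ from h0]
            simp⟩
    | some S => exact rel_some_case S ts p
  | nrel R ts =>
    cases R with
    | none =>
      rcases h0 : p (ts ⟨0, Nat.one_pos⟩) with j0 | j0
      · exact ⟨Empty, fun k => k.elim, fun k => k.elim, fun k => k.elim,
          fun A₁ A₂ a₁ a₂ => by
            simp only [Sat, adu, mix]
            rw [show p (ts ⟨0, Nat.one_pos⟩) = _ from h0]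
            simp⟩
      · exact ⟨PUnit, fun _ => .tru, fun _ => .tru, fun _ => ⟨.tru, .tru⟩,
          fun A₁ A₂ a₁ a₂ => by
            simp only [Sat, adu, mix]
            rw [show p (ts ⟨0, Nat.one_pos⟩) = _ from h0]
            simp⟩
    | some S => exact nrel_some_case S ts p
  | iAnd I hI f h ih =>
    choose K γ₁ γ₂ hqf hiff using ih
    refine ⟨∀ i, K i, fun c => .iAnd I (fun i => γ₁ i (c i)), fun c => .iAnd I (fun i => γ₂ i (c i)),
      fun c => ⟨.iAnd I hI _ (fun i => (hqf i (c i)).1), .iAnd I hI _ (fun i => (hqf i (c i)).2)⟩,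
      fun A₁ A₂ a₁ a₂ => ?_⟩
    simp only [Sat, hiff]
    rw [Classical.skolem]
    constructor
    · rintro ⟨c, hc⟩; exact ⟨c, fun i => (hc i).1, fun i => (hc i).2⟩
    · rintro ⟨c, h1, h2⟩; exact ⟨c, fun i => ⟨h1 i, h2 i⟩⟩
  | iOr I hI f h ih =>
    choose K γ₁ γ₂ hqf hiff using ih
    refine ⟨Σ i, K i, fun c => γ₁ c.1 c.2, fun c => γ₂ c.1 c.2,
      fun c => hqf c.1 c.2, fun A₁ A₂ a₁ a₂ => ?_⟩
    simp only [Sat, hiff]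
    constructor
    · rintro ⟨i, k, hk⟩; exact ⟨⟨i, k⟩, hk⟩
    · rintro ⟨⟨i, k⟩, hk⟩; exact ⟨i, k, hk⟩

lemma isQF_or {n} {φ ψ : Formula τ n} (h1 : IsQF φ) (h2 : IsQF ψ) : IsQF (φ.or ψ) := by
  refine IsQF.iOr _ inferInstance _ (fun b => ?_)
  cases b <;> simp [h1, h2]

/-- Conjoining a QF formula into a tΣ formula. -/
lemma conjoinQF {κ : Cardinal} (hκ : ℵ₀ ≤ κ) :
    ∀ {n} (Δ : Formula τ n) (lam : Ordinal), TSigma τ κ lam Δ →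
    ∀ (γ : Formula τ n), IsQF γ →
    ∃ Δ' : Formula τ n, TSigma τ κ lam Δ' ∧ rank Δ' ≤ rank Δ ∧
      ∀ (A : Struc τ) (v : Fin n → A.carrier), (Sat A Δ' v ↔ Sat A γ v ∧ Sat A Δ v) := by
  intro n Δ
  induction Δ with
  | ex ψ ih =>
    intro lam h γ hγ
    cases h with
    | qf h => cases h
    | ex hψ =>
      obtain ⟨Δ', h1, h2, h3⟩ := ih lam hψ (relabel Fin.castSucc γ) (isQF_relabel _ hγ)
      refine ⟨.ex Δ', .ex h1, ?_, fun A v => ?_⟩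
      · simp only [rank]
        exact add_le_add_left h2 1
      · simp only [Sat, h3, sat_relabel]
        have hv : ∀ a : A.carrier, (Fin.snoc v a ∘ Fin.castSucc) = v :=
          fun a => funext fun i => Fin.snoc_castSucc ..
        constructor
        · rintro ⟨a, hg, hp⟩
          exact ⟨by rw [hv a] at hg; exact hg, a, hp⟩
        · rintro ⟨hg, a, hp⟩
          exact ⟨a, by rw [hv a]; exact hg, hp⟩
  | iAnd I f ih =>
    intro lam h γ hγ
    cases h with
    | qf h =>
      exact ⟨γ.and _, .qf (isQF_and hγ h),
        by rw [rank_qf (isQF_and hγ h)]; exact zero_le, fun A v => sat_and _ _ _⟩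
    | conj I f hI lam' hlt hc =>
      rcases eq_zero_or_pos lam with hlam | hlam
      · subst hlam
        haveI : IsEmpty I := ⟨fun i => absurd (hlt i) (not_lt_of_ge zero_le)⟩
        have hqf : IsQF (Formula.iAnd I f) := .iAnd I inferInstance f (fun i => isEmptyElim i)
        exact ⟨γ.and _, .qf (isQF_and hγ hqf),
          by rw [rank_qf (isQF_and hγ hqf)]; exact zero_le, fun A v => sat_and _ _ _⟩
      · refine ⟨.iAnd (Option I) (fun o => o.elim γ f),
          .conj _ _ ?_ (fun o => o.elim 0 lam') (fun o => ?_) (fun o => ?_), ?_, fun A v => ?_⟩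
        · rw [Cardinal.mk_option]
          exact Cardinal.add_lt_of_lt hκ hI (one_lt_aleph0.trans_le hκ)
        · cases o with
          | none => exact hlam
          | some i => exact hlt i
        · cases o with
          | none => exact .qf hγ
          | some i => exact hc i
        · simp only [rank]
          refine ciSup_le' fun o => ?_
          cases o with
          | none => rw [Option.elim]; rw [rank_qf hγ]; exact zero_le
          | some i => exact le_ciSup (Cardinal.bddAbove_range _) i
        · simp only [Sat, Option.forall, Option.elim]
  | _ =>
    intro lam h γ hγ
    cases h with
    | qf h =>
      exact ⟨γ.and _, .qf (isQF_and hγ h),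
        by rw [rank_qf (isQF_and hγ h)]; exact zero_le, fun A v => sat_and _ _ _⟩

/-- Disjoining a QF formula into a tΠ formula. -/
lemma disjoinQF {κ : Cardinal} (hκ : ℵ₀ ≤ κ) :
    ∀ {n} (Δ : Formula τ n) (lam : Ordinal), TPi τ κ lam Δ →
    ∀ (γ : Formula τ n), IsQF γ →
    ∃ Δ' : Formula τ n, TPi τ κ lam Δ' ∧ rank Δ' ≤ rank Δ ∧
      ∀ (A : Struc τ) (v : Fin n → A.carrier), (Sat A Δ' v ↔ Sat A γ v ∨ Sat A Δ v) := by
  intro n Δ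
  induction Δ with
  | all ψ ih =>
    intro lam h γ hγ
    cases h with
    | qf h => cases h
    | all hψ =>
      obtain ⟨Δ', h1, h2, h3⟩ := ih lam hψ (relabel Fin.castSucc γ) (isQF_relabel _ hγ)
      refine ⟨.all Δ', .all h1, ?_, fun A v => ?_⟩
      · simp only [rank]
        exact add_le_add_left h2 1
      · simp only [Sat, h3, sat_relabel]
        have hv : ∀ a : A.carrier, (Fin.snoc v a ∘ Fin.castSucc) = v :=
          fun a => funext fun i => Fin.snoc_castSucc ..
        constructor
        · intro h
          by_cases hg : Sat A γ v
          · exact Or.inl hg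
          · refine Or.inr fun a => (h a).resolve_left ?_
            rw [hv a]; exact hg
        · rintro (hg | hp) a
          · exact Or.inl (by rw [hv a]; exact hg)
          · exact Or.inr (hp a)
  | iOr I f ih =>
    intro lam h γ hγ
    cases h with
    | qf h =>
      exact ⟨γ.or _, .qf (isQF_or hγ h),
        by rw [rank_qf (isQF_or hγ h)]; exact zero_le, fun A v => sat_or _ _ _⟩
    | disj I f hI lam' hlt hc =>
      rcases eq_zero_or_pos lam with hlam | hlam
      · subst hlam
        haveI : IsEmpty I := ⟨fun i => absurd (hlt i) (not_lt_of_ge zero_le)⟩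
        have hqf : IsQF (Formula.iOr I f) := .iOr I inferInstance f (fun i => isEmptyElim i)
        exact ⟨γ.or _, .qf (isQF_or hγ hqf),
          by rw [rank_qf (isQF_or hγ hqf)]; exact zero_le, fun A v => sat_or _ _ _⟩
      · refine ⟨.iOr (Option I) (fun o => o.elim γ f),
          .disj _ _ ?_ (fun o => o.elim 0 lam') (fun o => ?_) (fun o => ?_), ?_, fun A v => ?_⟩
        · rw [Cardinal.mk_option]
          exact Cardinal.add_lt_of_lt hκ hI (one_lt_aleph0.trans_le hκ)
        · cases o with
          | none => exact hlam
          | some i => exact hlt i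
        · cases o with
          | none => exact .qf hγ
          | some i => exact hc i
        · simp only [rank]
          refine ciSup_le' fun o => ?_
          cases o with
          | none => rw [Option.elim]; rw [rank_qf hγ]; exact zero_le
          | some i => exact le_ciSup (Cardinal.bddAbove_range _) i
        · simp only [Sat, Option.exists, Option.elim]
  | _ =>
    intro lam h γ hγ
    cases h with
    | qf h =>
      exact ⟨γ.or _, .qf (isQF_or hγ h),
        by rw [rank_qf (isQF_or hγ h)]; exact zero_le, fun A v => sat_or _ _ _⟩

lemma sat_iff_not_nnfNeg {A : Struc τ} {n} (φ : Formula τ n) (v : Fin n → A.carrier) :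
    Sat A φ v ↔ ¬ Sat A (nnfNeg φ) v := by
  rw [sat_nnfNeg]; tauto

/-- Decomposition of QF formulae of τ over the sum-like structure. -/
lemma qf_decomp_sum (Ξ : QFInterp (annotV τ) τ) {m n₁ n₂ : ℕ} (φ : Formula τ m)
    (hφ : IsQF φ) (p : Fin m → Fin n₁ ⊕ Fin n₂) :
    ∃ (K : Type) (γ₁ : K → Formula τ n₁) (γ₂ : K → Formula τ n₂),
      (∀ k, IsQF (γ₁ k) ∧ IsQF (γ₂ k)) ∧
      ∀ (A₁ A₂ : Struc τ) a₁ a₂ h₁ h₂,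
        (Sat (sumLike Ξ A₁ A₂) φ (Vm Ξ p a₁ a₂ h₁ h₂) ↔
          ∃ k, Sat A₁ (γ₁ k) a₁ ∧ Sat A₂ (γ₂ k) a₂) := by
  induction hφ with
  | tru =>
    exact ⟨PUnit, fun _ => .tru, fun _ => .tru, fun _ => ⟨.tru, .tru⟩,
      fun A₁ A₂ a₁ a₂ h₁ h₂ => by simp [Sat]⟩
  | fls =>
    exact ⟨Empty, fun k => k.elim, fun k => k.elim, fun k => k.elim,
      fun A₁ A₂ a₁ a₂ h₁ h₂ => by simp [Sat]⟩
  | rel R ts =>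
    obtain ⟨K, γ₁, γ₂, hqf, hiff⟩ := qf_decomp (Ξ.xiR R) (Ξ.hR R) (fun i => p (ts i))
    refine ⟨K, γ₁, γ₂, hqf, fun A₁ A₂ a₁ a₂ h₁ h₂ => ?_⟩
    rw [← hiff]
    show Sat (adu A₁ A₂) (Ξ.xiR R) (fun i => (Vm Ξ p a₁ a₂ h₁ h₂ (ts i)).1) ↔ _
    rw [show (fun i => (Vm Ξ p a₁ a₂ h₁ h₂ (ts i)).1) = mix (fun i => p (ts i)) a₁ a₂ from
      funext fun i => Vm_val Ξ p a₁ a₂ h₁ h₂ (ts i)]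
  | nrel R ts =>
    obtain ⟨K, γ₁, γ₂, hqf, hiff⟩ :=
      qf_decomp (nnfNeg (Ξ.xiR R)) (isQF_nnfNeg (Ξ.hR R)) (fun i => p (ts i))
    refine ⟨K, γ₁, γ₂, hqf, fun A₁ A₂ a₁ a₂ h₁ h₂ => ?_⟩
    rw [← hiff]
    show ¬ Sat (adu A₁ A₂) (Ξ.xiR R) (fun i => (Vm Ξ p a₁ a₂ h₁ h₂ (ts i)).1) ↔ _
    rw [show (fun i => (Vm Ξ p a₁ a₂ h₁ h₂ (ts i)).1) = mix (fun i => p (ts i)) a₁ a₂ from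
      funext fun i => Vm_val Ξ p a₁ a₂ h₁ h₂ (ts i)]
    exact (sat_nnfNeg _ _).symm
  | eq i j =>
    have base : ∀ (A₁ A₂ : Struc τ) a₁ a₂ h₁ h₂,
        Sat (sumLike Ξ A₁ A₂) (Formula.eq i j) (Vm Ξ p a₁ a₂ h₁ h₂) ↔
          mix p a₁ a₂ i = mix p a₁ a₂ j := by
      intro A₁ A₂ a₁ a₂ h₁ h₂
      show Vm Ξ p a₁ a₂ h₁ h₂ i = Vm Ξ p a₁ a₂ h₁ h₂ j ↔ _
      rw [← Vm_val Ξ p a₁ a₂ h₁ h₂ i, ← Vm_val Ξ p a₁ a₂ h₁ h₂ j]; exact Subtype.ext_iff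
    rcases hi : p i with ji | ji <;> rcases hj : p j with jj | jj
    · exact ⟨PUnit, fun _ => .eq ji jj, fun _ => .tru, fun _ => ⟨.eq _ _, .tru⟩,
        fun A₁ A₂ a₁ a₂ h₁ h₂ => by
          rw [base]
          simp [Sat, mix, hi, hj]⟩
    · exact ⟨Empty, fun k => k.elim, fun k => k.elim, fun k => k.elim,
        fun A₁ A₂ a₁ a₂ h₁ h₂ => by rw [base]; simp [Sat, mix, hi, hj]⟩
    · exact ⟨Empty, fun k => k.elim, fun k => k.elim, fun k => k.elim,
        fun A₁ A₂ a₁ a₂ h₁ h₂ => by rw [base]; simp [Sat, mix, hi, hj]⟩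
    · exact ⟨PUnit, fun _ => .tru, fun _ => .eq ji jj, fun _ => ⟨.tru, .eq _ _⟩,
        fun A₁ A₂ a₁ a₂ h₁ h₂ => by
          rw [base]
          simp [Sat, mix, hi, hj]⟩
  | neq i j =>
    have base : ∀ (A₁ A₂ : Struc τ) a₁ a₂ h₁ h₂,
        Sat (sumLike Ξ A₁ A₂) (Formula.neq i j) (Vm Ξ p a₁ a₂ h₁ h₂) ↔
          ¬ (mix p a₁ a₂ i = mix p a₁ a₂ j) := by
      intro A₁ A₂ a₁ a₂ h₁ h₂
      show ¬ (Vm Ξ p a₁ a₂ h₁ h₂ i = Vm Ξ p a₁ a₂ h₁ h₂ j) ↔ _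
      rw [← Vm_val Ξ p a₁ a₂ h₁ h₂ i, ← Vm_val Ξ p a₁ a₂ h₁ h₂ j]; exact not_congr Subtype.ext_iff
    rcases hi : p i with ji | ji <;> rcases hj : p j with jj | jj
    · exact ⟨PUnit, fun _ => .neq ji jj, fun _ => .tru, fun _ => ⟨.neq _ _, .tru⟩,
        fun A₁ A₂ a₁ a₂ h₁ h₂ => by
          rw [base]
          simp [Sat, mix, hi, hj]⟩
    · exact ⟨PUnit, fun _ => .tru, fun _ => .tru, fun _ => ⟨.tru, .tru⟩,
        fun A₁ A₂ a₁ a₂ h₁ h₂ => by rw [base]; simp [Sat, mix, hi, hj]⟩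
    · exact ⟨PUnit, fun _ => .tru, fun _ => .tru, fun _ => ⟨.tru, .tru⟩,
        fun A₁ A₂ a₁ a₂ h₁ h₂ => by rw [base]; simp [Sat, mix, hi, hj]⟩
    · exact ⟨PUnit, fun _ => .tru, fun _ => .neq ji jj, fun _ => ⟨.tru, .neq _ _⟩,
        fun A₁ A₂ a₁ a₂ h₁ h₂ => by
          rw [base]
          simp [Sat, mix, hi, hj]⟩
  | iAnd I hI f h ih =>
    choose K γ₁ γ₂ hqf hiff using ih
    refine ⟨∀ i, K i, fun c => .iAnd I (fun i => γ₁ i (c i)), fun c => .iAnd I (fun i => γ₂ i (c i)),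
      fun c => ⟨.iAnd I hI _ (fun i => (hqf i (c i)).1), .iAnd I hI _ (fun i => (hqf i (c i)).2)⟩,
      fun A₁ A₂ a₁ a₂ h₁ h₂ => ?_⟩
    simp only [Sat, hiff]
    rw [Classical.skolem]
    constructor
    · rintro ⟨c, hc⟩; exact ⟨c, fun i => (hc i).1, fun i => (hc i).2⟩
    · rintro ⟨c, ha, hb⟩; exact ⟨c, fun i => ⟨ha i, hb i⟩⟩
  | iOr I hI f h ih =>
    choose K γ₁ γ₂ hqf hiff using ih
    refine ⟨Σ i, K i, fun c => γ₁ c.1 c.2, fun c => γ₂ c.1 c.2,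
      fun c => hqf c.1 c.2, fun A₁ A₂ a₁ a₂ h₁ h₂ => ?_⟩
    simp only [Sat, hiff]
    constructor
    · rintro ⟨i, k, hk⟩; exact ⟨⟨i, k⟩, hk⟩
    · rintro ⟨⟨i, k⟩, hk⟩; exact ⟨i, k, hk⟩

/-- Extension of a pattern by a left variable. -/
def pextL {m n₁ n₂ : ℕ} (p : Fin m → Fin n₁ ⊕ Fin n₂) : Fin (m+1) → Fin (n₁+1) ⊕ Fin n₂ :=
  Fin.snoc (fun i => Sum.map Fin.castSucc id (p i)) (Sum.inl (Fin.last n₁))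

/-- Extension of a pattern by a right variable. -/
def pextR {m n₁ n₂ : ℕ} (p : Fin m → Fin n₁ ⊕ Fin n₂) : Fin (m+1) → Fin n₁ ⊕ Fin (n₂+1) :=
  Fin.snoc (fun i => Sum.map id Fin.castSucc (p i)) (Sum.inr (Fin.last n₂))

lemma snoc_Vm_left (Ξ : QFInterp (annotV τ) τ) {A₁ A₂ : Struc τ} {m n₁ n₂ : ℕ}
    (p : Fin m → Fin n₁ ⊕ Fin n₂) (a₁ : Fin n₁ → A₁.carrier) (a₂ : Fin n₂ → A₂.carrier)
    (h₁ h₂) (b : A₁.carrier) (hb : Guard Ξ A₁ A₂ (Sum.inl b))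
    (h₁' : ∀ j : Fin (n₁+1), Guard Ξ A₁ A₂ (Sum.inl (Fin.snoc (α := fun _ => A₁.carrier) a₁ b j))) :
    Fin.snoc (Vm Ξ p a₁ a₂ h₁ h₂) (⟨Sum.inl b, hb⟩ : (sumLike Ξ A₁ A₂).carrier) =
      Vm Ξ (pextL p) (Fin.snoc a₁ b) a₂ h₁' h₂ := by
  funext i
  refine Fin.lastCases ?_ (fun i' => ?_) i <;> apply Subtype.ext
  · refine (congrArg Subtype.val (Fin.snoc_last (α := fun _ => (sumLike Ξ A₁ A₂).carrier)
      (p := Vm Ξ p a₁ a₂ h₁ h₂) (x := ⟨Sum.inl b, hb⟩))).trans ?_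
    simp only [Vm_val]
    show Sum.inl b = (pextL p (Fin.last m)).elim _ _
    rw [show pextL p (Fin.last m) = Sum.inl (Fin.last n₁) from Fin.snoc_last _ _]
    simp [Fin.snoc_last]
  · refine (congrArg Subtype.val (Fin.snoc_castSucc (α := fun _ => (sumLike Ξ A₁ A₂).carrier)
      (p := Vm Ξ p a₁ a₂ h₁ h₂) (x := ⟨Sum.inl b, hb⟩) (i := i'))).trans ?_
    simp only [Vm_val]
    show mix p a₁ a₂ i' = (pextL p (Fin.castSucc i')).elim _ _
    rw [show pextL p (Fin.castSucc i') = Sum.map Fin.castSucc id (p i') from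
      Fin.snoc_castSucc _ _ _]
    rcases hpi : p i' with j | j <;> simp [mix, hpi, Fin.snoc_castSucc]

lemma snoc_Vm_right (Ξ : QFInterp (annotV τ) τ) {A₁ A₂ : Struc τ} {m n₁ n₂ : ℕ}
    (p : Fin m → Fin n₁ ⊕ Fin n₂) (a₁ : Fin n₁ → A₁.carrier) (a₂ : Fin n₂ → A₂.carrier)
    (h₁ h₂) (b : A₂.carrier) (hb : Guard Ξ A₁ A₂ (Sum.inr b))
    (h₂' : ∀ j : Fin (n₂+1), Guard Ξ A₁ A₂ (Sum.inr (Fin.snoc (α := fun _ => A₂.carrier) a₂ b j))) :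
    Fin.snoc (Vm Ξ p a₁ a₂ h₁ h₂) (⟨Sum.inr b, hb⟩ : (sumLike Ξ A₁ A₂).carrier) =
      Vm Ξ (pextR p) a₁ (Fin.snoc a₂ b) h₁ h₂' := by
  funext i
  refine Fin.lastCases ?_ (fun i' => ?_) i <;> apply Subtype.ext
  · refine (congrArg Subtype.val (Fin.snoc_last (α := fun _ => (sumLike Ξ A₁ A₂).carrier)
      (p := Vm Ξ p a₁ a₂ h₁ h₂) (x := ⟨Sum.inr b, hb⟩))).trans ?_
    simp only [Vm_val]
    show Sum.inr b = (pextR p (Fin.last m)).elim _ _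
    rw [show pextR p (Fin.last m) = Sum.inr (Fin.last n₂) from Fin.snoc_last _ _]
    simp [Fin.snoc_last]
  · refine (congrArg Subtype.val (Fin.snoc_castSucc (α := fun _ => (sumLike Ξ A₁ A₂).carrier)
      (p := Vm Ξ p a₁ a₂ h₁ h₂) (x := ⟨Sum.inr b, hb⟩) (i := i'))).trans ?_
    simp only [Vm_val]
    show mix p a₁ a₂ i' = (pextR p (Fin.castSucc i')).elim _ _
    rw [show pextR p (Fin.castSucc i') = Sum.map id Fin.castSucc (p i') from
      Fin.snoc_castSucc _ _ _]
    rcases hpi : p i' with j | j <;> simp [mix, hpi, Fin.snoc_castSucc]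

universe u

/-- Σ-shaped decomposition target. -/
def SigDec (Ξ : QFInterp (annotV τ) τ) (lam : Ordinal) {m n₁ n₂ : ℕ}
    (φ : Formula τ m) (p : Fin m → Fin n₁ ⊕ Fin n₂) : Prop :=
  ∃ (K : Type) (Δ₁ : K → Formula τ n₁) (Δ₂ : K → Formula τ n₂),
    (∀ k, TSigmaInf τ lam (Δ₁ k) ∧ TSigmaInf τ lam (Δ₂ k) ∧
      rank.{u} (Δ₁ k) ≤ rank.{u} φ ∧ rank.{u} (Δ₂ k) ≤ rank.{u} φ) ∧
    ∀ (A₁ A₂ : Struc τ) a₁ a₂ h₁ h₂,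
      (Sat (sumLike Ξ A₁ A₂) φ (Vm Ξ p a₁ a₂ h₁ h₂) ↔
        ∃ k, Sat A₁ (Δ₁ k) a₁ ∧ Sat A₂ (Δ₂ k) a₂)

/-- Π-shaped decomposition target. -/
def PiDec (Ξ : QFInterp (annotV τ) τ) (lam : Ordinal) {m n₁ n₂ : ℕ}
    (φ : Formula τ m) (p : Fin m → Fin n₁ ⊕ Fin n₂) : Prop :=
  ∃ (K : Type) (Δ₁ : K → Formula τ n₁) (Δ₂ : K → Formula τ n₂),
    (∀ k, TPiInf τ lam (Δ₁ k) ∧ TPiInf τ lam (Δ₂ k) ∧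
      rank.{u} (Δ₁ k) ≤ rank.{u} φ ∧ rank.{u} (Δ₂ k) ≤ rank.{u} φ) ∧
    ∀ (A₁ A₂ : Struc τ) a₁ a₂ h₁ h₂,
      (Sat (sumLike Ξ A₁ A₂) φ (Vm Ξ p a₁ a₂ h₁ h₂) ↔
        ∀ k, Sat A₁ (Δ₁ k) a₁ ∨ Sat A₂ (Δ₂ k) a₂)

lemma sigDec_of_qf (Ξ : QFInterp (annotV τ) τ) {m n₁ n₂ : ℕ} {φ : Formula τ m}
    (hφ : IsQF φ) (p : Fin m → Fin n₁ ⊕ Fin n₂) : SigDec Ξ 0 φ p := by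
  obtain ⟨K, γ₁, γ₂, hqf, hiff⟩ := qf_decomp_sum Ξ φ hφ p
  exact ⟨K, γ₁, γ₂, fun k => ⟨⟨ℵ₀, le_rfl, .qf (hqf k).1⟩, ⟨ℵ₀, le_rfl, .qf (hqf k).2⟩,
    by rw [rank_qf (hqf k).1]; exact zero_le, by rw [rank_qf (hqf k).2]; exact zero_le⟩,
    hiff⟩

lemma piDec_of_qf (Ξ : QFInterp (annotV τ) τ) {m n₁ n₂ : ℕ} {φ : Formula τ m}
    (hφ : IsQF φ) (p : Fin m → Fin n₁ ⊕ Fin n₂) : PiDec Ξ 0 φ p := by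
  obtain ⟨K, γ₁, γ₂, hqf, hiff⟩ := qf_decomp_sum Ξ (nnfNeg φ) (isQF_nnfNeg hφ) p
  refine ⟨K, fun k => nnfNeg (γ₁ k), fun k => nnfNeg (γ₂ k),
    fun k => ⟨⟨ℵ₀, le_rfl, .qf (isQF_nnfNeg (hqf k).1)⟩, ⟨ℵ₀, le_rfl, .qf (isQF_nnfNeg (hqf k).2)⟩,
      by rw [rank_qf (isQF_nnfNeg (hqf k).1)]; exact zero_le,
      by rw [rank_qf (isQF_nnfNeg (hqf k).2)]; exact zero_le⟩,
    fun A₁ A₂ a₁ a₂ h₁ h₂ => ?_⟩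
  rw [sat_iff_not_nnfNeg, hiff]
  push_neg
  constructor
  · intro h k
    rcases Classical.em (Sat A₁ (γ₁ k) a₁) with h1 | h1
    · exact Or.inr ((sat_nnfNeg _ _).mpr (h k h1))
    · exact Or.inl ((sat_nnfNeg _ _).mpr h1)
  · intro h k h1
    rcases h k with h2 | h2
    · exact absurd h1 ((sat_nnfNeg _ _).mp h2)
    · exact fun h3 => ((sat_nnfNeg _ _).mp h2) h3

lemma forall_or_left_const {α : Type} (D : α → Prop) (C : Prop) :
    (∀ b, D b ∨ C) ↔ (∀ b, D b) ∨ C := by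
  by_cases h : C <;> simp [h]

/-- The main decomposition theorem: Feferman–Vaught decompositions for
tΣ and tΠ formulae over a quantifier-free sum-like operation. -/
theorem mainDec (Ξ : QFInterp (annotV τ) τ) {κ : Cardinal} (hκ : ℵ₀ ≤ κ) :
    ∀ {m} (φ : Formula τ m) (lam : Ordinal) {n₁ n₂ : ℕ} (p : Fin m → Fin n₁ ⊕ Fin n₂),
      (TSigma τ κ lam φ → SigDec.{u} Ξ lam φ p) ∧ (TPi τ κ lam φ → PiDec.{u} Ξ lam φ p) := by
  intro m φ
  induction φ with
  | ex ψ ih =>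
    intro lam n₁ n₂ p
    constructor
    · intro h
      cases h with
      | qf hq => cases hq
      | ex hψ =>
        obtain ⟨KL, ΔL₁, ΔL₂, hclL, hiffL⟩ := (ih lam (pextL p)).1 hψ
        obtain ⟨KR, ΔR₁, ΔR₂, hclR, hiffR⟩ := (ih lam (pextR p)).1 hψ
        obtain ⟨Kg, g₁, g₂, hgqf, hgiff⟩ := qf_decomp (τ := τ) Ξ.xiU Ξ.hU
          (fun _ : Fin 1 => (Sum.inl (Fin.last n₁) : Fin (n₁+1) ⊕ Fin n₂))
        obtain ⟨Kg', g₁', g₂', hgqf', hgiff'⟩ := qf_decomp (τ := τ) Ξ.xiU Ξ.hU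
          (fun _ : Fin 1 => (Sum.inr (Fin.last n₂) : Fin n₁ ⊕ Fin (n₂+1)))
        have hD1 : ∀ kg : KL × Kg, ∃ D : Formula τ (n₁+1), TSigmaInf τ lam D ∧
            rank D ≤ rank (ΔL₁ kg.1) ∧
            ∀ (A : Struc τ) v, (Sat A D v ↔ Sat A (g₁ kg.2) v ∧ Sat A (ΔL₁ kg.1) v) := by
          rintro ⟨k, g⟩
          obtain ⟨κ', hκ', hT⟩ := (hclL k).1
          obtain ⟨D, h1, h2, h3⟩ := conjoinQF hκ' _ lam hT _ (hgqf g).1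
          exact ⟨D, ⟨κ', hκ', h1⟩, h2, h3⟩
        choose D1 hD1c hD1r hD1s using hD1
        have hD2 : ∀ kg : KL × Kg, ∃ D : Formula τ n₂, TSigmaInf τ lam D ∧
            rank D ≤ rank (ΔL₂ kg.1) ∧
            ∀ (A : Struc τ) v, (Sat A D v ↔ Sat A (g₂ kg.2) v ∧ Sat A (ΔL₂ kg.1) v) := by
          rintro ⟨k, g⟩
          obtain ⟨κ', hκ', hT⟩ := (hclL k).2.1
          obtain ⟨D, h1, h2, h3⟩ := conjoinQF hκ' _ lam hT _ (hgqf g).2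
          exact ⟨D, ⟨κ', hκ', h1⟩, h2, h3⟩
        choose D2 hD2c hD2r hD2s using hD2
        have hE1 : ∀ kg : KR × Kg', ∃ D : Formula τ n₁, TSigmaInf τ lam D ∧
            rank D ≤ rank (ΔR₁ kg.1) ∧
            ∀ (A : Struc τ) v, (Sat A D v ↔ Sat A (g₁' kg.2) v ∧ Sat A (ΔR₁ kg.1) v) := by
          rintro ⟨k, g⟩
          obtain ⟨κ', hκ', hT⟩ := (hclR k).1
          obtain ⟨D, h1, h2, h3⟩ := conjoinQF hκ' _ lam hT _ (hgqf' g).1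
          exact ⟨D, ⟨κ', hκ', h1⟩, h2, h3⟩
        choose E1 hE1c hE1r hE1s using hE1
        have hE2 : ∀ kg : KR × Kg', ∃ D : Formula τ (n₂+1), TSigmaInf τ lam D ∧
            rank D ≤ rank (ΔR₂ kg.1) ∧
            ∀ (A : Struc τ) v, (Sat A D v ↔ Sat A (g₂' kg.2) v ∧ Sat A (ΔR₂ kg.1) v) := by
          rintro ⟨k, g⟩
          obtain ⟨κ', hκ', hT⟩ := (hclR k).2.1
          obtain ⟨D, h1, h2, h3⟩ := conjoinQF hκ' _ lam hT _ (hgqf' g).2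
          exact ⟨D, ⟨κ', hκ', h1⟩, h2, h3⟩
        choose E2 hE2c hE2r hE2s using hE2
        refine ⟨(KL × Kg) ⊕ (KR × Kg'),
          Sum.elim (fun kg => .ex (D1 kg)) (fun kg => E1 kg),
          Sum.elim (fun kg => D2 kg) (fun kg => .ex (E2 kg)), ?_, ?_⟩
        · rintro (kg | kg)
          · obtain ⟨κ', hκ', hT⟩ := hD1c kg
            refine ⟨⟨κ', hκ', .ex hT⟩, hD2c kg, ?_, ?_⟩
            · show rank (Formula.ex (D1 kg)) ≤ rank (Formula.ex ψ)
              simp only [rank]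
              exact add_le_add_left ((hD1r kg).trans (hclL kg.1).2.2.1) 1
            · show rank (D2 kg) ≤ rank (Formula.ex ψ)
              simp only [rank]
              exact ((hD2r kg).trans (hclL kg.1).2.2.2).trans (self_le_add_right _ 1)
          · obtain ⟨κ', hκ', hT⟩ := hE2c kg
            refine ⟨hE1c kg, ⟨κ', hκ', .ex hT⟩, ?_, ?_⟩
            · show rank (E1 kg) ≤ rank (Formula.ex ψ)
              simp only [rank]
              exact ((hE1r kg).trans (hclR kg.1).2.2.1).trans (self_le_add_right _ 1)
            · show rank (Formula.ex (E2 kg)) ≤ rank (Formula.ex ψ)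
              simp only [rank]
              exact add_le_add_left ((hE2r kg).trans (hclR kg.1).2.2.2) 1
        · intro A₁ A₂ a₁ a₂ h₁ h₂
          have hg1 : ∀ b : A₁.carrier, Guard Ξ A₁ A₂ (Sum.inl b) ↔
              ∃ g, Sat A₁ (g₁ g) (Fin.snoc a₁ b) ∧ Sat A₂ (g₂ g) a₂ := by
            intro b
            have hmix : mix (fun _ : Fin 1 => (Sum.inl (Fin.last n₁) : Fin (n₁+1) ⊕ Fin n₂))
                (Fin.snoc a₁ b) a₂ = fun _ => Sum.inl b :=
              funext fun t => by simp [mix, Fin.snoc_last]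
            have := hgiff A₁ A₂ (Fin.snoc a₁ b) a₂
            rw [hmix] at this
            exact this
          have hg2 : ∀ b : A₂.carrier, Guard Ξ A₁ A₂ (Sum.inr b) ↔
              ∃ g, Sat A₁ (g₁' g) a₁ ∧ Sat A₂ (g₂' g) (Fin.snoc a₂ b) := by
            intro b
            have hmix : mix (fun _ : Fin 1 => (Sum.inr (Fin.last n₂) : Fin n₁ ⊕ Fin (n₂+1)))
                a₁ (Fin.snoc a₂ b) = fun _ => Sum.inr b :=
              funext fun t => by simp [mix, Fin.snoc_last]
            have := hgiff' A₁ A₂ a₁ (Fin.snoc a₂ b)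
            rw [hmix] at this
            exact this
          have hsem : Sat (sumLike Ξ A₁ A₂) (Formula.ex ψ) (Vm Ξ p a₁ a₂ h₁ h₂) ↔
              (∃ b : A₁.carrier, Guard Ξ A₁ A₂ (Sum.inl b) ∧
                 ∃ k, Sat A₁ (ΔL₁ k) (Fin.snoc a₁ b) ∧ Sat A₂ (ΔL₂ k) a₂) ∨
              (∃ b : A₂.carrier, Guard Ξ A₁ A₂ (Sum.inr b) ∧
                 ∃ k, Sat A₁ (ΔR₁ k) a₁ ∧ Sat A₂ (ΔR₂ k) (Fin.snoc a₂ b)) := by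
            show (∃ c : (sumLike Ξ A₁ A₂).carrier, Sat _ ψ (Fin.snoc _ c)) ↔ _
            constructor
            · rintro ⟨⟨x, hx⟩, hs⟩
              cases x with
              | inl b =>
                left
                have h₁' : ∀ j : Fin (n₁+1), Guard Ξ A₁ A₂
                    (Sum.inl (Fin.snoc (α := fun _ => A₁.carrier) a₁ b j)) := fun j =>
                  Fin.lastCases (by rw [Fin.snoc_last]; exact hx)
                    (fun j' => by rw [Fin.snoc_castSucc]; exact h₁ j') j
                rw [snoc_Vm_left Ξ p a₁ a₂ h₁ h₂ b hx h₁'] at hs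
                exact ⟨b, hx, (hiffL A₁ A₂ _ a₂ h₁' h₂).mp hs⟩
              | inr b =>
                right
                have h₂' : ∀ j : Fin (n₂+1), Guard Ξ A₁ A₂
                    (Sum.inr (Fin.snoc (α := fun _ => A₂.carrier) a₂ b j)) := fun j =>
                  Fin.lastCases (by rw [Fin.snoc_last]; exact hx)
                    (fun j' => by rw [Fin.snoc_castSucc]; exact h₂ j') j
                rw [snoc_Vm_right Ξ p a₁ a₂ h₁ h₂ b hx h₂'] at hs
                exact ⟨b, hx, (hiffR A₁ A₂ a₁ _ h₁ h₂').mp hs⟩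
            · rintro (⟨b, hb, hk⟩ | ⟨b, hb, hk⟩)
              · have h₁' : ∀ j : Fin (n₁+1), Guard Ξ A₁ A₂
                    (Sum.inl (Fin.snoc (α := fun _ => A₁.carrier) a₁ b j)) := fun j =>
                  Fin.lastCases (by rw [Fin.snoc_last]; exact hb)
                    (fun j' => by rw [Fin.snoc_castSucc]; exact h₁ j') j
                refine ⟨⟨Sum.inl b, hb⟩, ?_⟩
                rw [snoc_Vm_left Ξ p a₁ a₂ h₁ h₂ b hb h₁']
                exact (hiffL A₁ A₂ _ a₂ h₁' h₂).mpr hk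
              · have h₂' : ∀ j : Fin (n₂+1), Guard Ξ A₁ A₂
                    (Sum.inr (Fin.snoc (α := fun _ => A₂.carrier) a₂ b j)) := fun j =>
                  Fin.lastCases (by rw [Fin.snoc_last]; exact hb)
                    (fun j' => by rw [Fin.snoc_castSucc]; exact h₂ j') j
                refine ⟨⟨Sum.inr b, hb⟩, ?_⟩
                rw [snoc_Vm_right Ξ p a₁ a₂ h₁ h₂ b hb h₂']
                exact (hiffR A₁ A₂ a₁ _ h₁ h₂').mpr hk
          rw [hsem]
          constructor
          · rintro (⟨b, hb, k, hP, hQ⟩ | ⟨b, hb, k, hP, hQ⟩)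
            · obtain ⟨g, hG1, hG2⟩ := (hg1 b).mp hb
              refine ⟨Sum.inl (k, g), ?_, ?_⟩
              · exact ⟨b, (hD1s (k, g) A₁ _).mpr ⟨hG1, hP⟩⟩
              · exact (hD2s (k, g) A₂ _).mpr ⟨hG2, hQ⟩
            · obtain ⟨g, hG1, hG2⟩ := (hg2 b).mp hb
              refine ⟨Sum.inr (k, g), ?_, ?_⟩
              · exact (hE1s (k, g) A₁ _).mpr ⟨hG1, hP⟩
              · exact ⟨b, (hE2s (k, g) A₂ _).mpr ⟨hG2, hQ⟩⟩
          · rintro ⟨k | k, hP, hQ⟩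
            · obtain ⟨b, hb⟩ := hP
              obtain ⟨hG1, hP'⟩ := (hD1s k A₁ _).mp hb
              obtain ⟨hG2, hQ'⟩ := (hD2s k A₂ _).mp hQ
              exact Or.inl ⟨b, (hg1 b).mpr ⟨k.2, hG1, hG2⟩, k.1, hP', hQ'⟩
            · obtain ⟨b, hb⟩ := hQ
              obtain ⟨hG2, hQ'⟩ := (hE2s k A₂ _).mp hb
              obtain ⟨hG1, hP'⟩ := (hE1s k A₁ _).mp hP
              exact Or.inr ⟨b, (hg2 b).mpr ⟨k.2, hG1, hG2⟩, k.1, hP', hQ'⟩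
    · intro h
      cases h with
      | qf hq => cases hq
  | all ψ ih =>
    intro lam n₁ n₂ p
    constructor
    · intro h
      cases h with
      | qf hq => cases hq
    · intro h
      cases h with
      | qf hq => cases hq
      | all hψ =>
        obtain ⟨KL, ΔL₁, ΔL₂, hclL, hiffL⟩ := (ih lam (pextL p)).2 hψ
        obtain ⟨KR, ΔR₁, ΔR₂, hclR, hiffR⟩ := (ih lam (pextR p)).2 hψ
        obtain ⟨Kg, g₁, g₂, hgqf, hgiff⟩ := qf_decomp (τ := τ) Ξ.xiU Ξ.hU
          (fun _ : Fin 1 => (Sum.inl (Fin.last n₁) : Fin (n₁+1) ⊕ Fin n₂))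
        obtain ⟨Kg', g₁', g₂', hgqf', hgiff'⟩ := qf_decomp (τ := τ) Ξ.xiU Ξ.hU
          (fun _ : Fin 1 => (Sum.inr (Fin.last n₂) : Fin n₁ ⊕ Fin (n₂+1)))
        have hD1 : ∀ kg : KL × Kg, ∃ D : Formula τ (n₁+1), TPiInf τ lam D ∧
            rank D ≤ rank (ΔL₁ kg.1) ∧
            ∀ (A : Struc τ) v, (Sat A D v ↔ ¬ Sat A (g₁ kg.2) v ∨ Sat A (ΔL₁ kg.1) v) := by
          rintro ⟨k, g⟩
          obtain ⟨κ', hκ', hT⟩ := (hclL k).1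
          obtain ⟨D, h1, h2, h3⟩ := disjoinQF hκ' _ lam hT _ (isQF_nnfNeg (hgqf g).1)
          exact ⟨D, ⟨κ', hκ', h1⟩, h2, fun A v => by rw [h3, sat_nnfNeg]⟩
        choose D1 hD1c hD1r hD1s using hD1
        have hD2 : ∀ kg : KL × Kg, ∃ D : Formula τ n₂, TPiInf τ lam D ∧
            rank D ≤ rank (ΔL₂ kg.1) ∧
            ∀ (A : Struc τ) v, (Sat A D v ↔ ¬ Sat A (g₂ kg.2) v ∨ Sat A (ΔL₂ kg.1) v) := by
          rintro ⟨k, g⟩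
          obtain ⟨κ', hκ', hT⟩ := (hclL k).2.1
          obtain ⟨D, h1, h2, h3⟩ := disjoinQF hκ' _ lam hT _ (isQF_nnfNeg (hgqf g).2)
          exact ⟨D, ⟨κ', hκ', h1⟩, h2, fun A v => by rw [h3, sat_nnfNeg]⟩
        choose D2 hD2c hD2r hD2s using hD2
        have hE1 : ∀ kg : KR × Kg', ∃ D : Formula τ n₁, TPiInf τ lam D ∧
            rank D ≤ rank (ΔR₁ kg.1) ∧
            ∀ (A : Struc τ) v, (Sat A D v ↔ ¬ Sat A (g₁' kg.2) v ∨ Sat A (ΔR₁ kg.1) v) := by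
          rintro ⟨k, g⟩
          obtain ⟨κ', hκ', hT⟩ := (hclR k).1
          obtain ⟨D, h1, h2, h3⟩ := disjoinQF hκ' _ lam hT _ (isQF_nnfNeg (hgqf' g).1)
          exact ⟨D, ⟨κ', hκ', h1⟩, h2, fun A v => by rw [h3, sat_nnfNeg]⟩
        choose E1 hE1c hE1r hE1s using hE1
        have hE2 : ∀ kg : KR × Kg', ∃ D : Formula τ (n₂+1), TPiInf τ lam D ∧
            rank D ≤ rank (ΔR₂ kg.1) ∧
            ∀ (A : Struc τ) v, (Sat A D v ↔ ¬ Sat A (g₂' kg.2) v ∨ Sat A (ΔR₂ kg.1) v) := by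
          rintro ⟨k, g⟩
          obtain ⟨κ', hκ', hT⟩ := (hclR k).2.1
          obtain ⟨D, h1, h2, h3⟩ := disjoinQF hκ' _ lam hT _ (isQF_nnfNeg (hgqf' g).2)
          exact ⟨D, ⟨κ', hκ', h1⟩, h2, fun A v => by rw [h3, sat_nnfNeg]⟩
        choose E2 hE2c hE2r hE2s using hE2
        refine ⟨(KL × Kg) ⊕ (KR × Kg'),
          Sum.elim (fun kg => .all (D1 kg)) (fun kg => E1 kg),
          Sum.elim (fun kg => D2 kg) (fun kg => .all (E2 kg)), ?_, ?_⟩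
        · rintro (kg | kg)
          · obtain ⟨κ', hκ', hT⟩ := hD1c kg
            refine ⟨⟨κ', hκ', .all hT⟩, hD2c kg, ?_, ?_⟩
            · show rank (Formula.all (D1 kg)) ≤ rank (Formula.all ψ)
              simp only [rank]
              exact add_le_add_left ((hD1r kg).trans (hclL kg.1).2.2.1) 1
            · show rank (D2 kg) ≤ rank (Formula.all ψ)
              simp only [rank]
              exact ((hD2r kg).trans (hclL kg.1).2.2.2).trans (self_le_add_right _ 1)
          · obtain ⟨κ', hκ', hT⟩ := hE2c kg
            refine ⟨hE1c kg, ⟨κ', hκ', .all hT⟩, ?_, ?_⟩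
            · show rank (E1 kg) ≤ rank (Formula.all ψ)
              simp only [rank]
              exact ((hE1r kg).trans (hclR kg.1).2.2.1).trans (self_le_add_right _ 1)
            · show rank (Formula.all (E2 kg)) ≤ rank (Formula.all ψ)
              simp only [rank]
              exact add_le_add_left ((hE2r kg).trans (hclR kg.1).2.2.2) 1
        · intro A₁ A₂ a₁ a₂ h₁ h₂
          have hg1 : ∀ b : A₁.carrier, Guard Ξ A₁ A₂ (Sum.inl b) ↔
              ∃ g, Sat A₁ (g₁ g) (Fin.snoc a₁ b) ∧ Sat A₂ (g₂ g) a₂ := by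
            intro b
            have hmix : mix (fun _ : Fin 1 => (Sum.inl (Fin.last n₁) : Fin (n₁+1) ⊕ Fin n₂))
                (Fin.snoc a₁ b) a₂ = fun _ => Sum.inl b :=
              funext fun t => by simp [mix, Fin.snoc_last]
            have := hgiff A₁ A₂ (Fin.snoc a₁ b) a₂
            rw [hmix] at this
            exact this
          have hg2 : ∀ b : A₂.carrier, Guard Ξ A₁ A₂ (Sum.inr b) ↔
              ∃ g, Sat A₁ (g₁' g) a₁ ∧ Sat A₂ (g₂' g) (Fin.snoc a₂ b) := by
            intro b
            have hmix : mix (fun _ : Fin 1 => (Sum.inr (Fin.last n₂) : Fin n₁ ⊕ Fin (n₂+1)))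
                a₁ (Fin.snoc a₂ b) = fun _ => Sum.inr b :=
              funext fun t => by simp [mix, Fin.snoc_last]
            have := hgiff' A₁ A₂ a₁ (Fin.snoc a₂ b)
            rw [hmix] at this
            exact this
          have hsem : Sat (sumLike Ξ A₁ A₂) (Formula.all ψ) (Vm Ξ p a₁ a₂ h₁ h₂) ↔
              ((∀ b : A₁.carrier, Guard Ξ A₁ A₂ (Sum.inl b) →
                 ∀ k, Sat A₁ (ΔL₁ k) (Fin.snoc a₁ b) ∨ Sat A₂ (ΔL₂ k) a₂) ∧
               (∀ b : A₂.carrier, Guard Ξ A₁ A₂ (Sum.inr b) →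
                 ∀ k, Sat A₁ (ΔR₁ k) a₁ ∨ Sat A₂ (ΔR₂ k) (Fin.snoc a₂ b))) := by
            show (∀ c : (sumLike Ξ A₁ A₂).carrier, Sat _ ψ (Fin.snoc _ c)) ↔ _
            constructor
            · intro hall
              constructor
              · intro b hb
                have h₁' : ∀ j : Fin (n₁+1), Guard Ξ A₁ A₂
                    (Sum.inl (Fin.snoc (α := fun _ => A₁.carrier) a₁ b j)) := fun j =>
                  Fin.lastCases (by rw [Fin.snoc_last]; exact hb)
                    (fun j' => by rw [Fin.snoc_castSucc]; exact h₁ j') j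
                have := hall ⟨Sum.inl b, hb⟩
                rw [snoc_Vm_left Ξ p a₁ a₂ h₁ h₂ b hb h₁'] at this
                exact (hiffL A₁ A₂ _ a₂ h₁' h₂).mp this
              · intro b hb
                have h₂' : ∀ j : Fin (n₂+1), Guard Ξ A₁ A₂
                    (Sum.inr (Fin.snoc (α := fun _ => A₂.carrier) a₂ b j)) := fun j =>
                  Fin.lastCases (by rw [Fin.snoc_last]; exact hb)
                    (fun j' => by rw [Fin.snoc_castSucc]; exact h₂ j') j
                have := hall ⟨Sum.inr b, hb⟩
                rw [snoc_Vm_right Ξ p a₁ a₂ h₁ h₂ b hb h₂'] at this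
                exact (hiffR A₁ A₂ a₁ _ h₁ h₂').mp this
            · rintro ⟨hL, hR⟩ ⟨x, hx⟩
              cases x with
              | inl b =>
                have h₁' : ∀ j : Fin (n₁+1), Guard Ξ A₁ A₂
                    (Sum.inl (Fin.snoc (α := fun _ => A₁.carrier) a₁ b j)) := fun j =>
                  Fin.lastCases (by rw [Fin.snoc_last]; exact hx)
                    (fun j' => by rw [Fin.snoc_castSucc]; exact h₁ j') j
                rw [snoc_Vm_left Ξ p a₁ a₂ h₁ h₂ b hx h₁']
                exact (hiffL A₁ A₂ _ a₂ h₁' h₂).mpr (hL b hx)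
              | inr b =>
                have h₂' : ∀ j : Fin (n₂+1), Guard Ξ A₁ A₂
                    (Sum.inr (Fin.snoc (α := fun _ => A₂.carrier) a₂ b j)) := fun j =>
                  Fin.lastCases (by rw [Fin.snoc_last]; exact hx)
                    (fun j' => by rw [Fin.snoc_castSucc]; exact h₂ j') j
                rw [snoc_Vm_right Ξ p a₁ a₂ h₁ h₂ b hx h₂']
                exact (hiffR A₁ A₂ a₁ _ h₁ h₂').mpr (hR b hx)
          rw [hsem]
          have hLiff : (∀ b : A₁.carrier, Guard Ξ A₁ A₂ (Sum.inl b) →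
              ∀ k, Sat A₁ (ΔL₁ k) (Fin.snoc a₁ b) ∨ Sat A₂ (ΔL₂ k) a₂) ↔
              ∀ kg : KL × Kg, Sat A₁ (Formula.all (D1 kg)) a₁ ∨ Sat A₂ (D2 kg) a₂ := by
            constructor
            · rintro h ⟨k, g⟩
              have key : ∀ b : A₁.carrier,
                  (¬ Sat A₁ (g₁ g) (Fin.snoc a₁ b) ∨ Sat A₁ (ΔL₁ k) (Fin.snoc a₁ b)) ∨
                  (¬ Sat A₂ (g₂ g) a₂ ∨ Sat A₂ (ΔL₂ k) a₂) := by
                intro b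
                by_cases hG1 : Sat A₁ (g₁ g) (Fin.snoc a₁ b)
                · by_cases hG2 : Sat A₂ (g₂ g) a₂
                  · rcases h b ((hg1 b).mpr ⟨g, hG1, hG2⟩) k with h' | h'
                    · exact Or.inl (Or.inr h')
                    · exact Or.inr (Or.inr h')
                  · exact Or.inr (Or.inl hG2)
                · exact Or.inl (Or.inl hG1)
              rcases (forall_or_left_const (fun b =>
                  ¬ Sat A₁ (g₁ g) (Fin.snoc a₁ b) ∨ Sat A₁ (ΔL₁ k) (Fin.snoc a₁ b))
                  (¬ Sat A₂ (g₂ g) a₂ ∨ Sat A₂ (ΔL₂ k) a₂)).mp key with h' | h'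
              · exact Or.inl (fun b => (hD1s (k, g) A₁ _).mpr (h' b))
              · exact Or.inr ((hD2s (k, g) A₂ _).mpr h')
            · intro h b hb k
              obtain ⟨g, hG1, hG2⟩ := (hg1 b).mp hb
              rcases h (k, g) with h' | h'
              · rcases (hD1s (k, g) A₁ _).mp (h' b) with h'' | h''
                · exact absurd hG1 h''
                · exact Or.inl h''
              · rcases (hD2s (k, g) A₂ _).mp h' with h'' | h''
                · exact absurd hG2 h''
                · exact Or.inr h''
          have hRiff : (∀ b : A₂.carrier, Guard Ξ A₁ A₂ (Sum.inr b) →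
              ∀ k, Sat A₁ (ΔR₁ k) a₁ ∨ Sat A₂ (ΔR₂ k) (Fin.snoc a₂ b)) ↔
              ∀ kg : KR × Kg', Sat A₁ (E1 kg) a₁ ∨ Sat A₂ (Formula.all (E2 kg)) a₂ := by
            constructor
            · rintro h ⟨k, g⟩
              have key : ∀ b : A₂.carrier,
                  (¬ Sat A₂ (g₂' g) (Fin.snoc a₂ b) ∨ Sat A₂ (ΔR₂ k) (Fin.snoc a₂ b)) ∨
                  (¬ Sat A₁ (g₁' g) a₁ ∨ Sat A₁ (ΔR₁ k) a₁) := by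
                intro b
                by_cases hG2 : Sat A₂ (g₂' g) (Fin.snoc a₂ b)
                · by_cases hG1 : Sat A₁ (g₁' g) a₁
                  · rcases h b ((hg2 b).mpr ⟨g, hG1, hG2⟩) k with h' | h'
                    · exact Or.inr (Or.inr h')
                    · exact Or.inl (Or.inr h')
                  · exact Or.inr (Or.inl hG1)
                · exact Or.inl (Or.inl hG2)
              rcases (forall_or_left_const (fun b =>
                  ¬ Sat A₂ (g₂' g) (Fin.snoc a₂ b) ∨ Sat A₂ (ΔR₂ k) (Fin.snoc a₂ b))
                  (¬ Sat A₁ (g₁' g) a₁ ∨ Sat A₁ (ΔR₁ k) a₁)).mp key with h' | h'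
              · exact Or.inr (fun b => (hE2s (k, g) A₂ _).mpr (h' b))
              · exact Or.inl ((hE1s (k, g) A₁ _).mpr h')
            · intro h b hb k
              obtain ⟨g, hG1, hG2⟩ := (hg2 b).mp hb
              rcases h (k, g) with h' | h'
              · rcases (hE1s (k, g) A₁ _).mp h' with h'' | h''
                · exact absurd hG1 h''
                · exact Or.inl h''
              · rcases (hE2s (k, g) A₂ _).mp (h' b) with h'' | h''
                · exact absurd hG2 h''
                · exact Or.inr h''
          rw [hLiff, hRiff]
          constructor
          · rintro ⟨hL, hR⟩ (kg | kg)
            · exact hL kg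
            · exact hR kg
          · intro h
            exact ⟨fun kg => h (Sum.inl kg), fun kg => h (Sum.inr kg)⟩
  | iAnd I f ihf =>
    intro lam n₁ n₂ p
    constructor
    · intro h
      cases h with
      | qf hq => exact sigDec_of_qf Ξ hq p
      | conj _ _ hI lam' hlt hc =>
        have hPD : ∀ i, PiDec.{u} Ξ (lam' i) (f i) p := fun i => (ihf i (lam' i) p).2 (hc i)
        choose K' Δ₁ Δ₂ hcls hiffs using hPD
        choose κ1 hκ1a hκ1b using fun j : Σ i, K' i => (hcls j.1 j.2).1
        choose κ2 hκ2a hκ2b using fun j : Σ i, K' i => (hcls j.1 j.2).2.1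
        set base := ℵ₀ ⊔ Cardinal.mk (Σ i, K' i) ⊔ (⨆ j, κ1 j) ⊔ (⨆ j, κ2 j) with hbase
        have hκSinf : ℵ₀ ≤ Order.succ base :=
          (le_sup_of_le_left (le_sup_of_le_left le_sup_left)).trans (Order.le_succ _)
        have hJlt : Cardinal.mk (Σ i, K' i) < Order.succ base :=
          ((le_sup_of_le_left (le_sup_of_le_left le_sup_right))).trans_lt (Order.lt_succ _)
        have hκ1le : ∀ j, κ1 j ≤ Order.succ base := fun j =>
          ((le_ciSup (Cardinal.bddAbove_range _) j).trans
            (le_sup_of_le_left le_sup_right)).trans (Order.le_succ _)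
        have hκ2le : ∀ j, κ2 j ≤ Order.succ base := fun j =>
          ((le_ciSup (Cardinal.bddAbove_range _) j).trans le_sup_right).trans (Order.le_succ _)
        refine ⟨(Σ i, K' i) → Bool,
          fun S => .iAnd {j : Σ i, K' i // S j = true} (fun j => Δ₁ j.1.1 j.1.2),
          fun S => .iAnd {j : Σ i, K' i // S j = false} (fun j => Δ₂ j.1.1 j.1.2), ?_, ?_⟩
        · intro S
          refine ⟨⟨Order.succ base, hκSinf, .conj _ _
              (lt_of_le_of_lt (Cardinal.mk_subtype_le _) hJlt)
              (fun j => lam' j.1.1) (fun j => hlt j.1.1)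
              (fun j => (tSigma_tPi_mono (hκ1le j.1) _ _).2 (hκ1b j.1))⟩,
            ⟨Order.succ base, hκSinf, .conj _ _
              (lt_of_le_of_lt (Cardinal.mk_subtype_le _) hJlt)
              (fun j => lam' j.1.1) (fun j => hlt j.1.1)
              (fun j => (tSigma_tPi_mono (hκ2le j.1) _ _).2 (hκ2b j.1))⟩, ?_, ?_⟩
          · show rank (Formula.iAnd _ _) ≤ rank (Formula.iAnd I f)
            simp only [rank]
            refine ciSup_le' fun j => ?_
            exact ((hcls j.1.1 j.1.2).2.2.1).trans (le_ciSup (Cardinal.bddAbove_range _) j.1.1)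
          · show rank (Formula.iAnd _ _) ≤ rank (Formula.iAnd I f)
            simp only [rank]
            refine ciSup_le' fun j => ?_
            exact ((hcls j.1.1 j.1.2).2.2.2).trans (le_ciSup (Cardinal.bddAbove_range _) j.1.1)
        · intro A₁ A₂ a₁ a₂ h₁ h₂
          have hstep : Sat (sumLike Ξ A₁ A₂) (Formula.iAnd I f) (Vm Ξ p a₁ a₂ h₁ h₂) ↔
              ∀ j : Σ i, K' i, Sat A₁ (Δ₁ j.1 j.2) a₁ ∨ Sat A₂ (Δ₂ j.1 j.2) a₂ := by
            show (∀ i, Sat (sumLike Ξ A₁ A₂) (f i) (Vm Ξ p a₁ a₂ h₁ h₂)) ↔ _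
            constructor
            · rintro h ⟨i, k⟩
              exact (hiffs i A₁ A₂ a₁ a₂ h₁ h₂).mp (h i) k
            · intro h i
              exact (hiffs i A₁ A₂ a₁ a₂ h₁ h₂).mpr (fun k => h ⟨i, k⟩)
          rw [hstep, forall_or_iff_exists_bool]
          refine exists_congr fun S => and_congr ?_ ?_
          · show _ ↔ (∀ j : {j : Σ i, K' i // S j = true}, Sat A₁ (Δ₁ j.1.1 j.1.2) a₁)
            rw [Subtype.forall]
          · show _ ↔ (∀ j : {j : Σ i, K' i // S j = false}, Sat A₂ (Δ₂ j.1.1 j.1.2) a₂)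
            rw [Subtype.forall]
    · intro h
      cases h with
      | qf hq => exact piDec_of_qf Ξ hq p
  | iOr I f ihf =>
    intro lam n₁ n₂ p
    constructor
    · intro h
      cases h with
      | qf hq => exact sigDec_of_qf Ξ hq p
    · intro h
      cases h with
      | qf hq => exact piDec_of_qf Ξ hq p
      | disj _ _ hI lam' hlt hc =>
        have hSD : ∀ i, SigDec.{u} Ξ (lam' i) (f i) p := fun i => (ihf i (lam' i) p).1 (hc i)
        choose K' Δ₁ Δ₂ hcls hiffs using hSD
        choose κ1 hκ1a hκ1b using fun j : Σ i, K' i => (hcls j.1 j.2).1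
        choose κ2 hκ2a hκ2b using fun j : Σ i, K' i => (hcls j.1 j.2).2.1
        set base := ℵ₀ ⊔ Cardinal.mk (Σ i, K' i) ⊔ (⨆ j, κ1 j) ⊔ (⨆ j, κ2 j) with hbase
        have hκSinf : ℵ₀ ≤ Order.succ base :=
          (le_sup_of_le_left (le_sup_of_le_left le_sup_left)).trans (Order.le_succ _)
        have hJlt : Cardinal.mk (Σ i, K' i) < Order.succ base :=
          ((le_sup_of_le_left (le_sup_of_le_left le_sup_right))).trans_lt (Order.lt_succ _)
        have hκ1le : ∀ j, κ1 j ≤ Order.succ base := fun j =>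
          ((le_ciSup (Cardinal.bddAbove_range _) j).trans
            (le_sup_of_le_left le_sup_right)).trans (Order.le_succ _)
        have hκ2le : ∀ j, κ2 j ≤ Order.succ base := fun j =>
          ((le_ciSup (Cardinal.bddAbove_range _) j).trans le_sup_right).trans (Order.le_succ _)
        refine ⟨(Σ i, K' i) → Bool,
          fun S => .iOr {j : Σ i, K' i // S j = true} (fun j => Δ₁ j.1.1 j.1.2),
          fun S => .iOr {j : Σ i, K' i // S j = false} (fun j => Δ₂ j.1.1 j.1.2), ?_, ?_⟩
        · intro S
          refine ⟨⟨Order.succ base, hκSinf, .disj _ _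
              (lt_of_le_of_lt (Cardinal.mk_subtype_le _) hJlt)
              (fun j => lam' j.1.1) (fun j => hlt j.1.1)
              (fun j => (tSigma_tPi_mono (hκ1le j.1) _ _).1 (hκ1b j.1))⟩,
            ⟨Order.succ base, hκSinf, .disj _ _
              (lt_of_le_of_lt (Cardinal.mk_subtype_le _) hJlt)
              (fun j => lam' j.1.1) (fun j => hlt j.1.1)
              (fun j => (tSigma_tPi_mono (hκ2le j.1) _ _).1 (hκ2b j.1))⟩, ?_, ?_⟩
          · show rank (Formula.iOr _ _) ≤ rank (Formula.iOr I f)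
            simp only [rank]
            refine ciSup_le' fun j => ?_
            exact ((hcls j.1.1 j.1.2).2.2.1).trans (le_ciSup (Cardinal.bddAbove_range _) j.1.1)
          · show rank (Formula.iOr _ _) ≤ rank (Formula.iOr I f)
            simp only [rank]
            refine ciSup_le' fun j => ?_
            exact ((hcls j.1.1 j.1.2).2.2.2).trans (le_ciSup (Cardinal.bddAbove_range _) j.1.1)
        · intro A₁ A₂ a₁ a₂ h₁ h₂
          have hstep : Sat (sumLike Ξ A₁ A₂) (Formula.iOr I f) (Vm Ξ p a₁ a₂ h₁ h₂) ↔
              ∃ j : Σ i, K' i, Sat A₁ (Δ₁ j.1 j.2) a₁ ∧ Sat A₂ (Δ₂ j.1 j.2) a₂ := by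
            show (∃ i, Sat (sumLike Ξ A₁ A₂) (f i) (Vm Ξ p a₁ a₂ h₁ h₂)) ↔ _
            constructor
            · rintro ⟨i, hi⟩
              obtain ⟨k, hk⟩ := (hiffs i A₁ A₂ a₁ a₂ h₁ h₂).mp hi
              exact ⟨⟨i, k⟩, hk⟩
            · rintro ⟨⟨i, k⟩, hk⟩
              exact ⟨i, (hiffs i A₁ A₂ a₁ a₂ h₁ h₂).mpr ⟨k, hk⟩⟩
          rw [hstep, exists_and_iff_forall_bool]
          refine forall_congr' fun S => or_congr ?_ ?_
          · show _ ↔ (∃ j : {j : Σ i, K' i // S j = true}, Sat A₁ (Δ₁ j.1.1 j.1.2) a₁)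
            rw [Subtype.exists]
            exact exists_congr fun j => exists_prop.symm
          · show _ ↔ (∃ j : {j : Σ i, K' i // S j = false}, Sat A₂ (Δ₂ j.1.1 j.1.2) a₂)
            rw [Subtype.exists]
            exact exists_congr fun j => exists_prop.symm
  | _ =>
    intro lam n₁ n₂ p
    constructor
    · intro h
      cases h with
      | qf hq => exact sigDec_of_qf Ξ hq p
    · intro h
      cases h with
      | qf hq => exact piDec_of_qf Ξ hq p

end Aux

/-- For L one of tΣ_{∞,λ}[μ] or tΠ_{∞,λ}[μ] over τ and ⊛ a quantifier-free
sum-like binary operation on τ-structures: if A₁, A₁' satisfy the same L sentences, and A₂, A₂'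
satisfy the same L sentences, then A₁ ⊛ A₂ and A₁' ⊛ A₂' satisfy the same L sentences. -/
theorem stmt5 (τ : Vocab) [Fintype τ.Rel] (lam : Ordinal) (μ : Cardinal)
    (Ξ : QFInterp (annotV τ) τ) (A₁ A₁' A₂ A₂' : Struc τ) :
    ((∀ φ : Formula τ 0, TSigmaInf τ lam φ → rank φ ≤ μ →
        (Sat A₁ φ emptyA ↔ Sat A₁' φ emptyA)) →
     (∀ φ : Formula τ 0, TSigmaInf τ lam φ → rank φ ≤ μ →
        (Sat A₂ φ emptyA ↔ Sat A₂' φ emptyA)) →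
     ∀ φ : Formula τ 0, TSigmaInf τ lam φ → rank φ ≤ μ →
        (Sat (sumLike Ξ A₁ A₂) φ emptyA ↔ Sat (sumLike Ξ A₁' A₂') φ emptyA)) ∧
    ((∀ φ : Formula τ 0, TPiInf τ lam φ → rank φ ≤ μ →
        (Sat A₁ φ emptyA ↔ Sat A₁' φ emptyA)) →
     (∀ φ : Formula τ 0, TPiInf τ lam φ → rank φ ≤ μ →
        (Sat A₂ φ emptyA ↔ Sat A₂' φ emptyA)) →
     ∀ φ : Formula τ 0, TPiInf τ lam φ → rank φ ≤ μ →
        (Sat (sumLike Ξ A₁ A₂) φ emptyA ↔ Sat (sumLike Ξ A₁' A₂') φ emptyA)) := by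
  constructor
  · intro h1 h2 φ hφ hrank
    obtain ⟨κ, hκ, hT⟩ := hφ
    obtain ⟨K, Δ₁, Δ₂, hcls, hiff⟩ :=
      (mainDec Ξ hκ φ lam (fun i : Fin 0 => i.elim0)).1 hT
    have key : ∀ B₁ B₂ : Struc τ, Sat (sumLike Ξ B₁ B₂) φ emptyA ↔
        ∃ k, Sat B₁ (Δ₁ k) emptyA ∧ Sat B₂ (Δ₂ k) emptyA := by
      intro B₁ B₂
      have := hiff B₁ B₂ emptyA emptyA (fun j => j.elim0) (fun j => j.elim0)
      rwa [show Vm Ξ (fun i : Fin 0 => i.elim0) emptyA emptyA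
        (fun j => j.elim0) (fun j => j.elim0) = emptyA from funext fun i => i.elim0] at this
    rw [key A₁ A₂, key A₁' A₂']
    refine exists_congr fun k => and_congr ?_ ?_
    · exact h1 (Δ₁ k) (hcls k).1 (le_trans (hcls k).2.2.1 hrank)
    · exact h2 (Δ₂ k) (hcls k).2.1 (le_trans (hcls k).2.2.2 hrank)
  · intro h1 h2 φ hφ hrank
    obtain ⟨κ, hκ, hT⟩ := hφ
    obtain ⟨K, Δ₁, Δ₂, hcls, hiff⟩ :=
      (mainDec Ξ hκ φ lam (fun i : Fin 0 => i.elim0)).2 hT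
    have key : ∀ B₁ B₂ : Struc τ, Sat (sumLike Ξ B₁ B₂) φ emptyA ↔
        ∀ k, Sat B₁ (Δ₁ k) emptyA ∨ Sat B₂ (Δ₂ k) emptyA := by
      intro B₁ B₂
      have := hiff B₁ B₂ emptyA emptyA (fun j => j.elim0) (fun j => j.elim0)
      rwa [show Vm Ξ (fun i : Fin 0 => i.elim0) emptyA emptyA
        (fun j => j.elim0) (fun j => j.elim0) = emptyA from funext fun i => i.elim0] at this
    rw [key A₁ A₂, key A₁' A₂']
    refine forall_congr' fun k => or_congr ?_ ?_
    · exact h1 (Δ₁ k) (hcls k).1 (le_trans (hcls k).2.2.1 hrank)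
    · exact h2 (Δ₂ k) (hcls k).2.1 (le_trans (hcls k).2.2.2 hrank)

end FV
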